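/- arXiv:1409.5511 — 2 statements merged into one kernel-verified Lean document; each statement's English description precedes it below -/
import Mathlib

section
/- Let H be a group, G̃ = ℤ(H) ⋊ H the semidirect product of the additive group of the integral group ring ℤ(H) by H acting by right multiplication, G the subgroup of G̃ generated by A_ℤ(H) × {1} and {0} × H, and N = I₂(H) × {1}, which is normal in G. Then the assignment h ↦ N(0,h), h^ψ ↦ N(0,h)^{(1,1)} extends to a group epimorphism ε : χ(H) → G/N whose kernel equals the derived subgroup L(H)′ of L(H). -/
open Subgroup
open scoped commutatorElement

/-- Relators of the weak commutativity group. -/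
def chiRel (H : Type*) [Group H] : Set (Monoid.Coprod H H) :=
  {x | ∃ h : H, x = ⁅(Monoid.Coprod.inl h : Monoid.Coprod H H), Monoid.Coprod.inr h⁆}

/-- The weak commutativity group χ(H). -/
def chi (H : Type*) [Group H] : Type _ :=
  Monoid.Coprod H H ⧸ Subgroup.normalClosure (chiRel H)

noncomputable instance (H : Type*) [Group H] : Group (chi H) :=
  QuotientGroup.Quotient.group _

/-- Canonical map H → χ(H). -/
noncomputable def chiIota (H : Type*) [Group H] : H →* chi H :=
  (QuotientGroup.mk' _).comp Monoid.Coprod.inl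

/-- Canonical map H → χ(H), h ↦ h^ψ. -/
noncomputable def chiPsi (H : Type*) [Group H] : H →* chi H :=
  (QuotientGroup.mk' _).comp Monoid.Coprod.inr

noncomputable def chiH (H : Type*) [Group H] : Subgroup (chi H) := (chiIota H).range
noncomputable def chiHpsi (H : Type*) [Group H] : Subgroup (chi H) := (chiPsi H).range

/-- L(H) = ⟨h⁻¹ h^ψ⟩. -/
noncomputable def Lsub (H : Type*) [Group H] : Subgroup (chi H) :=
  Subgroup.closure {x | ∃ h : H, x = (chiIota H h)⁻¹ * chiPsi H h}

/-- D(H) = [H, H^ψ]. -/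
noncomputable def Dsub (H : Type*) [Group H] : Subgroup (chi H) := ⁅chiH H, chiHpsi H⁆

/-- W(H) = L(H) ∩ D(H). -/
noncomputable def Wsub (H : Type*) [Group H] : Subgroup (chi H) := Lsub H ⊓ Dsub H

/-- R(H) = [H, L(H), H^ψ]. -/
noncomputable def Rsub (H : Type*) [Group H] : Subgroup (chi H) := ⁅⁅chiH H, Lsub H⁆, chiHpsi H⁆

open MonoidAlgebra

/-- The augmentation ideal A_ℤ(H) of the integral group ring ℤ(H),
generated by {h - 1 : h ∈ H}. -/
noncomputable def augIdeal (H : Type*) [Group H] : Ideal (MonoidAlgebra ℤ H) :=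
  Ideal.span {x | ∃ h : H, x = MonoidAlgebra.of ℤ H h - 1}

/-- The two-sided ideal I₂(H) of ℤ(H) generated by {(h - 1)² : h ∈ H}
(as a left ideal span of all right multiples of the generators). -/
noncomputable def ideal2 (H : Type*) [Group H] : Ideal (MonoidAlgebra ℤ H) :=
  Ideal.span {x | ∃ (h : H) (b : MonoidAlgebra ℤ H),
    x = (MonoidAlgebra.of ℤ H h - 1) ^ 2 * b}

/-- Right multiplication by h as an automorphism of the additive group ℤ(H). -/
noncomputable def rmul (H : Type*) [Group H] (h : H) :
    MonoidAlgebra ℤ H ≃+ MonoidAlgebra ℤ H where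
  toFun x := x * MonoidAlgebra.of ℤ H h
  invFun x := x * MonoidAlgebra.of ℤ H h⁻¹
  left_inv x := by
    simp [mul_assoc, ← map_mul, ← MonoidAlgebra.one_def]
  right_inv x := by
    simp [mul_assoc, ← map_mul, ← MonoidAlgebra.one_def]
  map_add' x y := add_mul x y _

/-- The action of H on the (multiplicatively written) additive group of ℤ(H)
for which conjugation in ℤ(H) ⋊ H by h ∈ H is right multiplication by h. -/
noncomputable def phiAct (H : Type*) [Group H] :
    H →* MulAut (Multiplicative (MonoidAlgebra ℤ H)) where
  toFun h := AddEquiv.toMultiplicative (rmul H h⁻¹)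
  map_one' := by
    ext x
    simp [rmul, ← MonoidAlgebra.one_def]
  map_mul' h₁ h₂ := by
    ext x
    simp [rmul, mul_assoc, ← map_mul]

/-- G̃ = ℤ(H) ⋊ H. -/
abbrev Gtilde (H : Type*) [Group H] : Type _ :=
  SemidirectProduct (Multiplicative (MonoidAlgebra ℤ H)) H (phiAct H)
/-- The subgroup G of G̃ generated by A_ℤ(H) × {1} and {0} × H. -/
noncomputable def Gsub (H : Type*) [Group H] : Subgroup (Gtilde H) :=
  Subgroup.closure
    ({x | ∃ a ∈ augIdeal H, x = SemidirectProduct.inl (Multiplicative.ofAdd a)} ∪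
     {x | ∃ h : H, x = SemidirectProduct.inr h})

/-- The subgroup N = I₂(H) × {1} of G̃. -/
noncomputable def Nsub (H : Type*) [Group H] : Subgroup (Gtilde H) :=
  Subgroup.map (SemidirectProduct.inl :
      Multiplicative (MonoidAlgebra ℤ H) →* Gtilde H)
    (AddSubgroup.toSubgroup (ideal2 H).toAddSubgroup)

lemma ideal2_mul_right {H : Type*} [Group H] {x : MonoidAlgebra ℤ H}
    (hx : x ∈ ideal2 H) (c : MonoidAlgebra ℤ H) : x * c ∈ ideal2 H := by
  induction hx using Submodule.span_induction with
  | mem y hy =>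
      obtain ⟨h, b, rfl⟩ := hy
      exact Ideal.subset_span ⟨h, b * c, by rw [mul_assoc]⟩
  | zero => simpa using (ideal2 H).zero_mem
  | add y z _ _ hy hz => simpa [add_mul] using (ideal2 H).add_mem hy hz
  | smul r y _ hy => simpa [smul_mul_assoc, mul_assoc] using (ideal2 H).smul_mem r hy

instance Nsub_normal (H : Type*) [Group H] : (Nsub H).Normal := by
  constructor
  intro x hx g
  obtain ⟨a, ha, rfl⟩ := hx
  have key : g * SemidirectProduct.inl a * g⁻¹ =
      SemidirectProduct.inl (phiAct H g.right a) := by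
    ext
    · simp [SemidirectProduct.mul_left, SemidirectProduct.inv_left, mul_comm]
    · simp
  rw [key]
  refine ⟨phiAct H g.right a, ?_, rfl⟩
  show Multiplicative.toAdd (phiAct H g.right a) ∈ ideal2 H
  exact ideal2_mul_right ha (MonoidAlgebra.of ℤ H g.right⁻¹)
/-- N viewed as a subgroup of G. -/
noncomputable def NsubG (H : Type*) [Group H] : Subgroup ↥(Gsub H) :=
  (Nsub H).subgroupOf (Gsub H)

instance NsubG_normal (H : Type*) [Group H] : (NsubG H).Normal :=
  (Nsub_normal H).subgroupOf (Gsub H)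

lemma inr_mem_Gsub (H : Type*) [Group H] (h : H) :
    (SemidirectProduct.inr h : Gtilde H) ∈ Gsub H :=
  Subgroup.subset_closure (Or.inr ⟨h, rfl⟩)

lemma conj_mem_Gsub (H : Type*) [Group H] (h : H) :
    (SemidirectProduct.inl (Multiplicative.ofAdd (1 : MonoidAlgebra ℤ H)))⁻¹ *
        SemidirectProduct.inr h *
        SemidirectProduct.inl (Multiplicative.ofAdd (1 : MonoidAlgebra ℤ H)) ∈
      Gsub H := by
  have key : (SemidirectProduct.inl (Multiplicative.ofAdd (1 : MonoidAlgebra ℤ H)))⁻¹ *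
      SemidirectProduct.inr h *
      SemidirectProduct.inl (Multiplicative.ofAdd (1 : MonoidAlgebra ℤ H)) =
      (SemidirectProduct.inr h : Gtilde H) *
        SemidirectProduct.inl (Multiplicative.ofAdd
          ((1 : MonoidAlgebra ℤ H) - MonoidAlgebra.of ℤ H h)) := by
    apply SemidirectProduct.ext
    · simp only [SemidirectProduct.mul_left, SemidirectProduct.inv_left,
        SemidirectProduct.left_inl, SemidirectProduct.left_inr, SemidirectProduct.right_inl,
        SemidirectProduct.right_inr, SemidirectProduct.mul_right, SemidirectProduct.inv_right,
        map_one, inv_one, mul_one, one_mul, MulAut.one_apply]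
      apply Multiplicative.toAdd.injective
      change -1 + (1 : MonoidAlgebra ℤ H) * MonoidAlgebra.of ℤ H h⁻¹ =
        ((1 : MonoidAlgebra ℤ H) - MonoidAlgebra.of ℤ H h) * MonoidAlgebra.of ℤ H h⁻¹
      rw [sub_mul, ← map_mul, mul_inv_cancel, map_one, one_mul]
      abel
    · simp [div_eq_mul_inv, SemidirectProduct.mul_right, SemidirectProduct.inv_right]
  rw [key]
  exact mul_mem (inr_mem_Gsub H h)
    (Subgroup.subset_closure (Or.inl
      ⟨1 - MonoidAlgebra.of ℤ H h,
        by simpa using (augIdeal H).neg_mem (Ideal.subset_span ⟨h, rfl⟩), rfl⟩))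


section ChiLemmas
variable {H : Type*} [Group H]

/-- ℓ(g) = g⁻¹ g^ψ in χ(H). -/
noncomputable def lel (g : H) : chi H := (chiIota H g)⁻¹ * chiPsi H g

lemma chi_comm (h : H) : Commute (chiIota H h) (chiPsi H h) := by
  rw [← commutatorElement_eq_one_iff_commute]
  have : (⁅chiIota H h, chiPsi H h⁆ : chi H)
      = QuotientGroup.mk ⁅(Monoid.Coprod.inl h : Monoid.Coprod H H), Monoid.Coprod.inr h⁆ := rfl
  rw [this]
  exact (QuotientGroup.eq_one_iff _).mpr (Subgroup.subset_normalClosure ⟨h, rfl⟩)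

lemma lel_mem (g : H) : lel g ∈ Lsub H := Subgroup.subset_closure ⟨g, rfl⟩

lemma lel_one : lel (1 : H) = 1 := by simp [lel]

lemma psi_eq (h : H) : chiPsi H h = chiIota H h * lel h := by simp [lel]

lemma lel_mul (g h : H) :
    lel (g * h) = (chiIota H h)⁻¹ * lel g * chiIota H h * lel h := by
  simp only [lel, map_mul, mul_inv_rev]
  group

lemma lel_conj (x : H) : (chiIota H x)⁻¹ * lel x * chiIota H x = lel x := by
  have h := (chi_comm x).eq
  simp only [lel]
  rw [mul_assoc, mul_assoc, ← h]
  group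

lemma lel_conj' (x : H) : chiIota H x * lel x * (chiIota H x)⁻¹ = lel x := by
  have h := lel_conj x
  nth_rewrite 1 [← h]
  group

lemma lel_inv (x : H) : lel x⁻¹ = (lel x)⁻¹ := by
  have h := (chi_comm x).eq
  simp only [lel, map_inv, inv_inv]
  rw [eq_comm, mul_inv_rev, inv_inv, inv_mul_eq_iff_eq_mul, ← mul_assoc, ← h]
  group

lemma conj_lel_mem (g k : H) : (chiIota H k)⁻¹ * lel g * chiIota H k ∈ Lsub H := by
  have : (chiIota H k)⁻¹ * lel g * chiIota H k = lel (g * k) * (lel k)⁻¹ := by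
    rw [lel_mul]; group
  rw [this]
  exact mul_mem (lel_mem _) (inv_mem (lel_mem _))

lemma conj_mem_Lsub (k : H) {x : chi H} (hx : x ∈ Lsub H) :
    chiIota H k * x * (chiIota H k)⁻¹ ∈ Lsub H := by
  induction hx using Subgroup.closure_induction with
  | mem y hy =>
      obtain ⟨g, rfl⟩ := hy
      show chiIota H k * lel g * (chiIota H k)⁻¹ ∈ Lsub H
      have : chiIota H k * lel g * (chiIota H k)⁻¹
          = (chiIota H k⁻¹)⁻¹ * lel g * chiIota H k⁻¹ := by
        simp [map_inv]
      rw [this]; exact conj_lel_mem g k⁻¹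
  | one => simpa using (Lsub H).one_mem
  | mul y z _ _ hy hz =>
      have : chiIota H k * (y * z) * (chiIota H k)⁻¹
          = (chiIota H k * y * (chiIota H k)⁻¹) * (chiIota H k * z * (chiIota H k)⁻¹) := by
        group
      rw [this]; exact mul_mem hy hz
  | inv y _ hy =>
      have : chiIota H k * y⁻¹ * (chiIota H k)⁻¹
          = (chiIota H k * y * (chiIota H k)⁻¹)⁻¹ := by group
      rw [this]; exact inv_mem hy

lemma chi_eq_top :
    Subgroup.closure (Set.range (chiIota H) ∪ Set.range (chiPsi H)) = (⊤ : Subgroup (chi H)) := by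
  rw [eq_top_iff']
  intro x
  induction x using QuotientGroup.induction_on with
  | H w =>
    induction w using Monoid.Coprod.induction_on with
    | inl m => exact Subgroup.subset_closure (Or.inl ⟨m, rfl⟩)
    | inr m => exact Subgroup.subset_closure (Or.inr ⟨m, rfl⟩)
    | mul a b ha hb => exact mul_mem ha hb

lemma iota_mem_normalizer (h : H) : chiIota H h ∈ Subgroup.normalizer (Lsub H : Set (chi H)) := by
  rw [Subgroup.mem_normalizer_iff]
  intro y
  constructor
  · exact conj_mem_Lsub h
  · intro hy
    have h2 := conj_mem_Lsub h⁻¹ hy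
    simp only [map_inv] at h2
    have e : (chiIota H h)⁻¹ * (chiIota H h * y * (chiIota H h)⁻¹) * ((chiIota H h)⁻¹)⁻¹ = y := by
      group
    rwa [e] at h2

instance Lsub_normal : (Lsub H).Normal := by
  rw [← Subgroup.normalizer_eq_top_iff, eq_top_iff, ← chi_eq_top]
  apply (Subgroup.closure_le _).mpr
  rintro x (⟨h, rfl⟩ | ⟨h, rfl⟩)
  · exact iota_mem_normalizer h
  · show chiPsi H h ∈ Subgroup.normalizer (Lsub H : Set (chi H))
    rw [psi_eq]
    exact mul_mem (iota_mem_normalizer h) (Subgroup.le_normalizer (lel_mem h))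

end ChiLemmas
section CLemmas
variable {H : Type*} [Group H]

/-- χ(H)/L(H)'. -/
noncomputable abbrev chiC (H : Type*) [Group H] := chi H ⧸ (⁅Lsub H, Lsub H⁆ : Subgroup (chi H))

noncomputable def qmap (H : Type*) [Group H] : chi H →* chiC H :=
  QuotientGroup.mk' ⁅Lsub H, Lsub H⁆

/-- Image of L in χ/L'. -/
noncomputable def Mq (H : Type*) [Group H] : Subgroup (chiC H) := (Lsub H).map (qmap H)

instance : (Mq H).Normal :=
  Lsub_normal.map _ (QuotientGroup.mk'_surjective _)

lemma commQ {x y : chiC H} (hx : x ∈ Mq H) (hy : y ∈ Mq H) : Commute x y := by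
  obtain ⟨a, ha, rfl⟩ := hx
  obtain ⟨b, hb, rfl⟩ := hy
  rw [← commutatorElement_eq_one_iff_commute, ← map_commutatorElement]
  exact (QuotientGroup.eq_one_iff _).mpr (Subgroup.commutator_mem_commutator ha hb)

noncomputable instance : CommGroup ↥(Mq H) :=
  { (inferInstance : Group ↥(Mq H)) with
    mul_comm := fun a b => Subtype.ext (commQ a.2 b.2) }

noncomputable def lam (g : H) : ↥(Mq H) :=
  ⟨qmap H (lel g), Subgroup.mem_map_of_mem _ (lel_mem g)⟩

noncomputable def sig (k : H) : ↥(Mq H) →* ↥(Mq H) where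
  toFun a := ⟨(qmap H (chiIota H k))⁻¹ * ↑a * qmap H (chiIota H k), by
    have := (inferInstance : (Mq H).Normal).conj_mem _ a.2 (qmap H (chiIota H k))⁻¹
    simpa using this⟩
  map_one' := Subtype.ext (by simp)
  map_mul' a b := Subtype.ext (by
    show _ = _
    push_cast
    group)

lemma sig_comp (k k' : H) (v : ↥(Mq H)) : sig k (sig k' v) = sig (k' * k) v := by
  apply Subtype.ext
  show (qmap H (chiIota H k))⁻¹ * ((qmap H (chiIota H k'))⁻¹ * ↑v * qmap H (chiIota H k'))
      * qmap H (chiIota H k) = (qmap H (chiIota H (k' * k)))⁻¹ * ↑v * qmap H (chiIota H (k' * k))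
  simp only [map_mul]
  group

lemma lam_one : lam (1 : H) = 1 := Subtype.ext (by simp [lam, lel_one])

lemma sig_one_apply (v : ↥(Mq H)) : sig (1 : H) v = v := Subtype.ext (by simp [sig])

lemma lam_mul (g h : H) : lam (g * h) = sig h (lam g) * lam h := by
  apply Subtype.ext
  show qmap H (lel (g * h))
      = (qmap H (chiIota H h))⁻¹ * qmap H (lel g) * qmap H (chiIota H h) * qmap H (lel h)
  rw [lel_mul g h]
  simp [map_mul]

lemma sig_fix (x : H) : sig x (lam x) = lam x := by
  apply Subtype.ext
  show (qmap H (chiIota H x))⁻¹ * qmap H (lel x) * qmap H (chiIota H x) = qmap H (lel x)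
  have e : (qmap H (chiIota H x))⁻¹ * qmap H (lel x) * qmap H (chiIota H x)
      = qmap H ((chiIota H x)⁻¹ * lel x * chiIota H x) := by simp [map_mul]
  rw [e, lel_conj]

lemma sig_fix_inv (x : H) : sig x⁻¹ (lam x) = lam x := by
  have : sig x⁻¹ (sig x (lam x)) = sig (x * x⁻¹) (lam x) := sig_comp _ _ _
  rw [sig_fix] at this
  rw [this, mul_inv_cancel, sig_one_apply]

section AdditiveSide

noncomputable def lamA (g : H) : Additive ↥(Mq H) := Additive.ofMul (lam g)
noncomputable def sigA (k : H) : Additive ↥(Mq H) →+ Additive ↥(Mq H) :=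
  MonoidHom.toAdditive (sig k)

lemma lamA_one : lamA (1 : H) = 0 := by simp [lamA, lam_one]

lemma sigA_comp (k k' : H) (v : Additive ↥(Mq H)) : sigA k (sigA k' v) = sigA (k' * k) v :=
  congrArg Additive.ofMul (sig_comp k k' v.toMul)

lemma lamA_mul (g h : H) : lamA (g * h) = sigA h (lamA g) + lamA h :=
  congrArg Additive.ofMul (lam_mul g h)

lemma sigA_fix (x : H) : sigA x (lamA x) = lamA x :=
  congrArg Additive.ofMul (sig_fix x)

lemma sigA_fix_inv (x : H) : sigA x⁻¹ (lamA x) = lamA x :=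
  congrArg Additive.ofMul (sig_fix_inv x)

lemma lamA_inv (x : H) : lamA x⁻¹ = - lamA x := by
  have h1 : lamA (x * x⁻¹) = sigA x⁻¹ (lamA x) + lamA x⁻¹ := lamA_mul x x⁻¹
  rw [mul_inv_cancel, lamA_one, sigA_fix_inv] at h1
  exact eq_neg_of_add_eq_zero_right h1.symm

lemma sigA_shift (x k : H) : sigA k (lamA x) = lamA (x * k) - lamA k := by
  rw [lamA_mul x k]; abel

lemma s1 (g h : H) : sigA h⁻¹ (lamA (g * h)) = lamA g + lamA h := by
  rw [sigA_shift, mul_inv_cancel_right, lamA_inv]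
  abel

lemma s4 (g h : H) : sigA h (lamA (g * h)) = lamA (g * h) + lamA (g * h) - lamA h - lamA g := by
  have step0 : sigA h (lamA (g * h)) = sigA h (sigA g⁻¹ (sigA h⁻¹ (lamA (g * h)))) := by
    rw [sigA_comp, sigA_comp]
    have e : h⁻¹ * (g⁻¹ * h) = (g * h)⁻¹ * h := by group
    rw [e, ← sigA_comp, sigA_fix_inv]
  have step1 : sigA g⁻¹ (sigA h⁻¹ (lamA (g * h)))
      = lamA g + lamA (h * g⁻¹) + lamA g := by
    rw [s1, map_add, sigA_fix_inv, sigA_shift h g⁻¹, lamA_inv]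
    abel
  have step2 : sigA h (lamA (h * g⁻¹)) = lamA h - lamA g := by
    have e : sigA h (lamA (h * g⁻¹)) = sigA g (sigA (h * g⁻¹) (lamA (h * g⁻¹))) := by
      rw [sigA_comp]
      congr 1
      group
    rw [e, sigA_fix, sigA_shift, inv_mul_cancel_right]
  rw [step0, step1, map_add, map_add, step2, sigA_shift g h]
  abel

lemma s5 (g h : H) : lamA (g * h * h) = lamA (g * h) + lamA (g * h) - lamA g := by
  rw [lamA_mul (g * h) h, s4]
  abel

lemma s6 (g h k : H) :
    lamA (g * h * h * k) + lamA (g * k) = lamA (g * h * k) + lamA (g * h * k) := by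
  rw [lamA_mul (g * h * h) k, lamA_mul g k, lamA_mul (g * h) k, s5, map_sub, map_add]
  abel

end AdditiveSide
end CLemmas
section PhiSection
variable {H : Type*} [Group H]

noncomputable def Phi (H : Type*) [Group H] : MonoidAlgebra ℤ H →+ Additive ↥(Mq H) :=
  (Finsupp.liftAddHom (fun g => zmultiplesHom _ (- lamA g))).comp
    MonoidAlgebra.coeffAddEquiv.toAddMonoidHom

lemma Phi_single (g : H) (n : ℤ) : Phi H (MonoidAlgebra.single g n) = n • (- lamA g) := by
  exact Finsupp.liftAddHom_apply_single (fun g => zmultiplesHom (Additive ↥(Mq H)) (- lamA g)) g n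

lemma Phi_of (g : H) : Phi H (MonoidAlgebra.of ℤ H g) = - lamA g := by
  rw [MonoidAlgebra.of_apply, Phi_single, one_smul]

lemma Phi_one : Phi H (1 : MonoidAlgebra ℤ H) = 0 := by
  rw [MonoidAlgebra.one_def, Phi_single, lamA_one]
  simp

lemma expand_sq (g h k : H) :
    MonoidAlgebra.of ℤ H g * (MonoidAlgebra.of ℤ H h - 1) ^ 2 * MonoidAlgebra.of ℤ H k
      = MonoidAlgebra.of ℤ H (g * h * h * k) - MonoidAlgebra.of ℤ H (g * h * k)
        - MonoidAlgebra.of ℤ H (g * h * k) + MonoidAlgebra.of ℤ H (g * k) := by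
  simp only [map_mul]
  noncomm_ring

lemma Phi_sq (g h k : H) :
    Phi H (MonoidAlgebra.of ℤ H g * (MonoidAlgebra.of ℤ H h - 1) ^ 2
      * MonoidAlgebra.of ℤ H k) = 0 := by
  rw [expand_sq, map_add, map_sub, map_sub]
  simp only [Phi_of]
  have h6 : lamA (g * h * h * k) = lamA (g * h * k) + lamA (g * h * k) - lamA (g * k) := by
    rw [← s6 g h k]; abel
  rw [h6]; abel

/-- Generators of I₂ sandwiched between group elements. -/
def sqSet (H : Type*) [Group H] : Set (MonoidAlgebra ℤ H) :=
  {x | ∃ g h k : H,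
    x = MonoidAlgebra.of ℤ H g * (MonoidAlgebra.of ℤ H h - 1) ^ 2 * MonoidAlgebra.of ℤ H k}

lemma single_eq_zsmul_of (a : H) (b : ℤ) :
    (MonoidAlgebra.single a b : MonoidAlgebra ℤ H) = b • MonoidAlgebra.of ℤ H a := by
  rw [MonoidAlgebra.of_apply, MonoidAlgebra.smul_single', mul_one]

lemma sqClosure_mul_left (c x : MonoidAlgebra ℤ H)
    (hx : x ∈ AddSubgroup.closure (sqSet H)) :
    c * x ∈ AddSubgroup.closure (sqSet H) := by
  induction hx using AddSubgroup.closure_induction generalizing c with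
  | mem y hy =>
      obtain ⟨g, h, k, rfl⟩ := hy
      induction c using MonoidAlgebra.induction_linear with
      | zero => simpa using AddSubgroup.zero_mem _
      | add f f' hf hf' => rw [add_mul]; exact AddSubgroup.add_mem _ hf hf'
      | single a b =>
          rw [single_eq_zsmul_of, smul_mul_assoc]
          refine AddSubgroup.zsmul_mem _ (AddSubgroup.subset_closure ?_) b
          refine ⟨a * g, h, k, ?_⟩
          rw [map_mul]
          noncomm_ring
  | zero => simpa using AddSubgroup.zero_mem _
  | add y z _ _ hy hz => rw [mul_add]; exact AddSubgroup.add_mem _ (hy c) (hz c)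
  | neg y _ hy => rw [mul_neg]; exact AddSubgroup.neg_mem _ (hy c)

noncomputable def sqSubmodule (H : Type*) [Group H] :
    Submodule (MonoidAlgebra ℤ H) (MonoidAlgebra ℤ H) where
  carrier := AddSubgroup.closure (sqSet H)
  add_mem' := fun ha hb => AddSubgroup.add_mem _ ha hb
  zero_mem' := AddSubgroup.zero_mem _
  smul_mem' := fun c x hx => by simpa [smul_eq_mul] using sqClosure_mul_left c x hx

lemma ideal2_le_sqClosure {a : MonoidAlgebra ℤ H} (ha : a ∈ ideal2 H) :
    a ∈ AddSubgroup.closure (sqSet H) := by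
  have : ideal2 H ≤ sqSubmodule H := by
    rw [ideal2, Ideal.span_le]
    rintro x ⟨h, b, rfl⟩
    show (MonoidAlgebra.of ℤ H h - 1) ^ 2 * b ∈ AddSubgroup.closure (sqSet H)
    induction b using MonoidAlgebra.induction_linear with
    | zero => simpa using AddSubgroup.zero_mem _
    | add f f' hf hf' => rw [mul_add]; exact AddSubgroup.add_mem _ hf hf'
    | single k n =>
        rw [single_eq_zsmul_of, mul_smul_comm]
        refine AddSubgroup.zsmul_mem _ (AddSubgroup.subset_closure ?_) n
        exact ⟨1, h, k, by rw [map_one, one_mul]⟩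
  exact this ha

lemma Phi_sqClosure {a : MonoidAlgebra ℤ H} (h : a ∈ AddSubgroup.closure (sqSet H)) :
    Phi H a = 0 := by
  induction h using AddSubgroup.closure_induction with
  | mem y hy => obtain ⟨g, h, k, rfl⟩ := hy; exact Phi_sq g h k
  | zero => exact map_zero _
  | add y z _ _ hy hz => rw [map_add, hy, hz, add_zero]
  | neg y _ hy => rw [map_neg, hy, neg_zero]

lemma Phi_ideal2 {a : MonoidAlgebra ℤ H} (ha : a ∈ ideal2 H) : Phi H a = 0 :=
  Phi_sqClosure (ideal2_le_sqClosure ha)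

end PhiSection
section EpsSection
variable {H : Type*} [Group H]

open SemidirectProduct

noncomputable abbrev cOne (H : Type*) [Group H] : Gtilde H :=
  SemidirectProduct.inl (Multiplicative.ofAdd (1 : MonoidAlgebra ℤ H))

lemma conj_inl_eq (h : H) :
    (cOne H)⁻¹ * SemidirectProduct.inr h * cOne H =
      (SemidirectProduct.inr h : Gtilde H) *
        SemidirectProduct.inl (Multiplicative.ofAdd
          ((1 : MonoidAlgebra ℤ H) - MonoidAlgebra.of ℤ H h)) := by
  apply SemidirectProduct.ext
  · simp only [SemidirectProduct.mul_left, SemidirectProduct.inv_left,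
      SemidirectProduct.left_inl, SemidirectProduct.left_inr, SemidirectProduct.right_inl,
      SemidirectProduct.right_inr, SemidirectProduct.mul_right, SemidirectProduct.inv_right,
      map_one, inv_one, mul_one, one_mul, MulAut.one_apply]
    apply Multiplicative.toAdd.injective
    change -1 + (1 : MonoidAlgebra ℤ H) * MonoidAlgebra.of ℤ H h⁻¹ =
      ((1 : MonoidAlgebra ℤ H) - MonoidAlgebra.of ℤ H h) * MonoidAlgebra.of ℤ H h⁻¹
    rw [sub_mul, ← map_mul, mul_inv_cancel, map_one, one_mul]
    abel
  · simp [div_eq_mul_inv, SemidirectProduct.mul_right, SemidirectProduct.inv_right]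

lemma inr_conj_inl (g : H) (x : MonoidAlgebra ℤ H) :
    (SemidirectProduct.inr g : Gtilde H) * SemidirectProduct.inl (Multiplicative.ofAdd x)
      * (SemidirectProduct.inr g)⁻¹
      = SemidirectProduct.inl (Multiplicative.ofAdd (x * MonoidAlgebra.of ℤ H g⁻¹)) := by
  rw [show (SemidirectProduct.inr g : Gtilde H)⁻¹ = SemidirectProduct.inr g⁻¹ by
    rw [← map_inv]]
  rw [← SemidirectProduct.inl_aut]
  rfl

lemma inl_ofAdd_mul (x y : MonoidAlgebra ℤ H) :
    (SemidirectProduct.inl (Multiplicative.ofAdd x) : Gtilde H)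
      * SemidirectProduct.inl (Multiplicative.ofAdd y)
      = SemidirectProduct.inl (Multiplicative.ofAdd (x + y)) := by
  rw [← map_mul]; rfl

lemma inl_ofAdd_inv (x : MonoidAlgebra ℤ H) :
    (SemidirectProduct.inl (Multiplicative.ofAdd x) : Gtilde H)⁻¹
      = SemidirectProduct.inl (Multiplicative.ofAdd (-x)) := by
  rw [← map_inv]; rfl

lemma comm_calc (h : H) :
    ⁅(SemidirectProduct.inr h : Gtilde H), (cOne H)⁻¹ * SemidirectProduct.inr h * cOne H⁆
      = SemidirectProduct.inl (Multiplicative.ofAdd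
          ((((1 : MonoidAlgebra ℤ H) - MonoidAlgebra.of ℤ H h) * MonoidAlgebra.of ℤ H h⁻¹
            - ((1 : MonoidAlgebra ℤ H) - MonoidAlgebra.of ℤ H h)) * MonoidAlgebra.of ℤ H h⁻¹)) := by
  set u : MonoidAlgebra ℤ H := (1 : MonoidAlgebra ℤ H) - MonoidAlgebra.of ℤ H h with hu
  rw [conj_inl_eq, commutatorElement_def]
  have e1 : (SemidirectProduct.inr h : Gtilde H) *
      (SemidirectProduct.inr h * SemidirectProduct.inl (Multiplicative.ofAdd u)) *
      (SemidirectProduct.inr h)⁻¹ *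
      (SemidirectProduct.inr h * SemidirectProduct.inl (Multiplicative.ofAdd u))⁻¹
      = SemidirectProduct.inr h *
        (SemidirectProduct.inl (Multiplicative.ofAdd (u * MonoidAlgebra.of ℤ H h⁻¹)) *
          SemidirectProduct.inl (Multiplicative.ofAdd (-u))) * (SemidirectProduct.inr h)⁻¹ := by
    rw [← inr_conj_inl h u, ← inl_ofAdd_inv]
    group
  rw [e1, inl_ofAdd_mul, inr_conj_inl]
  congr 1
  rw [sub_eq_add_neg]

lemma zcal (h : H) :
    (((1 : MonoidAlgebra ℤ H) - MonoidAlgebra.of ℤ H h) * MonoidAlgebra.of ℤ H h⁻¹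
      - ((1 : MonoidAlgebra ℤ H) - MonoidAlgebra.of ℤ H h)) * MonoidAlgebra.of ℤ H h⁻¹
      = MonoidAlgebra.of ℤ H h *
          ((MonoidAlgebra.of ℤ H h⁻¹ - 1) ^ 2 * MonoidAlgebra.of ℤ H h⁻¹) := by
  have e : MonoidAlgebra.of ℤ H h * MonoidAlgebra.of ℤ H h⁻¹ = 1 := by
    rw [← map_mul, mul_inv_cancel, map_one]
  have e2 : ∀ x : MonoidAlgebra ℤ H,
      MonoidAlgebra.of ℤ H h * (MonoidAlgebra.of ℤ H h⁻¹ * x) = x := fun x => by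
    rw [← mul_assoc, e, one_mul]
  simp only [pow_two, sub_mul, mul_sub, one_mul, mul_one, mul_assoc]
  simp only [e2, e]

lemma comm_mem_Nsub (h : H) :
    ⁅(SemidirectProduct.inr h : Gtilde H), (cOne H)⁻¹ * SemidirectProduct.inr h * cOne H⁆
      ∈ Nsub H := by
  rw [comm_calc, zcal]
  have hmem : (Multiplicative.ofAdd (MonoidAlgebra.of ℤ H h *
        ((MonoidAlgebra.of ℤ H h⁻¹ - 1) ^ 2 * MonoidAlgebra.of ℤ H h⁻¹)))
      ∈ AddSubgroup.toSubgroup (ideal2 H).toAddSubgroup := by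
    show Multiplicative.toAdd (Multiplicative.ofAdd _) ∈ ideal2 H
    have hgen : (MonoidAlgebra.of ℤ H h⁻¹ - 1) ^ 2 * MonoidAlgebra.of ℤ H h⁻¹ ∈ ideal2 H :=
      Ideal.subset_span ⟨h⁻¹, MonoidAlgebra.of ℤ H h⁻¹, rfl⟩
    exact Ideal.mul_mem_left _ (MonoidAlgebra.of ℤ H h) hgen
  exact Subgroup.mem_map_of_mem _ hmem

noncomputable def j1 (H : Type*) [Group H] : H →* ↥(Gsub H) :=
  (SemidirectProduct.inr : H →* Gtilde H).codRestrict _ (inr_mem_Gsub H)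

noncomputable def j2 (H : Type*) [Group H] : H →* ↥(Gsub H) where
  toFun h := ⟨(cOne H)⁻¹ * SemidirectProduct.inr h * cOne H, conj_mem_Gsub H h⟩
  map_one' := Subtype.ext (by simp)
  map_mul' a b := Subtype.ext (by
    show (cOne H)⁻¹ * SemidirectProduct.inr (a * b) * cOne H = _
    push_cast
    rw [map_mul]
    group)

noncomputable def f0 (H : Type*) [Group H] : Monoid.Coprod H H →* ↥(Gsub H) ⧸ NsubG H :=
  Monoid.Coprod.lift ((QuotientGroup.mk' (NsubG H)).comp (j1 H))
    ((QuotientGroup.mk' (NsubG H)).comp (j2 H))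

lemma f0_rel {x : Monoid.Coprod H H} (hx : x ∈ chiRel H) : f0 H x = 1 := by
  obtain ⟨h, rfl⟩ := hx
  rw [map_commutatorElement]
  simp only [f0, Monoid.Coprod.lift_apply_inl, Monoid.Coprod.lift_apply_inr,
    MonoidHom.comp_apply]
  rw [← map_commutatorElement]
  rw [QuotientGroup.mk'_apply, QuotientGroup.eq_one_iff]
  have hq : (NsubG H) = (Nsub H).subgroupOf (Gsub H) := rfl
  rw [hq, Subgroup.mem_subgroupOf]
  have : ((⁅j1 H h, j2 H h⁆ : ↥(Gsub H)) : Gtilde H)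
      = ⁅(SemidirectProduct.inr h : Gtilde H), (cOne H)⁻¹ * SemidirectProduct.inr h * cOne H⁆ := by
    push_cast
    rfl
  rw [this]
  exact comm_mem_Nsub h

noncomputable def eps (H : Type*) [Group H] : chi H →* ↥(Gsub H) ⧸ NsubG H :=
  QuotientGroup.lift _ (f0 H)
    (Subgroup.normalClosure_le_normal (fun x hx => f0_rel hx))

lemma eps_iota (h : H) :
    eps H (chiIota H h) = QuotientGroup.mk ⟨SemidirectProduct.inr h, inr_mem_Gsub H h⟩ := rfl

lemma eps_psi (h : H) :
    eps H (chiPsi H h) = QuotientGroup.mk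
      ⟨(cOne H)⁻¹ * SemidirectProduct.inr h * cOne H, conj_mem_Gsub H h⟩ := rfl

lemma aug_one_sub (g : H) : (1 : MonoidAlgebra ℤ H) - MonoidAlgebra.of ℤ H g ∈ augIdeal H := by
  have := (augIdeal H).neg_mem (Ideal.subset_span ⟨g, rfl⟩)
  simpa using this

lemma inl_mem_Gsub {a : MonoidAlgebra ℤ H} (ha : a ∈ augIdeal H) :
    (SemidirectProduct.inl (Multiplicative.ofAdd a) : Gtilde H) ∈ Gsub H :=
  Subgroup.subset_closure (Or.inl ⟨a, ha, rfl⟩)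

lemma eps_lel (g : H) :
    eps H (lel g) = QuotientGroup.mk
      ⟨SemidirectProduct.inl (Multiplicative.ofAdd
          ((1 : MonoidAlgebra ℤ H) - MonoidAlgebra.of ℤ H g)),
        inl_mem_Gsub (aug_one_sub g)⟩ := by
  rw [lel, map_mul, map_inv, eps_iota, eps_psi]
  rw [← QuotientGroup.mk_inv, ← QuotientGroup.mk_mul]
  congr 1
  apply Subtype.ext
  push_cast
  rw [conj_inl_eq]
  group

end EpsSection
section FinalSection
variable {H : Type*} [Group H]

lemma eps_on_L {x : chi H} (hx : x ∈ Lsub H) :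
    ∃ (a : MonoidAlgebra ℤ H) (ha : a ∈ augIdeal H),
      eps H x = QuotientGroup.mk ⟨SemidirectProduct.inl (Multiplicative.ofAdd a),
          inl_mem_Gsub ha⟩ ∧
        qmap H x = ((Additive.toMul (Phi H a) : ↥(Mq H)) : chiC H) := by
  induction hx using Subgroup.closure_induction with
  | mem y hy =>
      obtain ⟨g, rfl⟩ := hy
      refine ⟨1 - MonoidAlgebra.of ℤ H g, aug_one_sub g, ?_, ?_⟩
      · exact eps_lel g
      · show qmap H (lel g) = _
        rw [map_sub, Phi_one, Phi_of, zero_sub, neg_neg]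
        rfl
  | one =>
      refine ⟨0, (augIdeal H).zero_mem, ?_, ?_⟩
      · have e : (⟨SemidirectProduct.inl (Multiplicative.ofAdd (0 : MonoidAlgebra ℤ H)),
            inl_mem_Gsub (augIdeal H).zero_mem⟩ : ↥(Gsub H)) = 1 := by
          apply Subtype.ext
          show SemidirectProduct.inl (Multiplicative.ofAdd (0 : MonoidAlgebra ℤ H)) = 1
          rw [ofAdd_zero, map_one]
        rw [map_one, e]
        rfl
      · rw [map_one, map_zero]
        rfl
  | mul y z _ _ hy hz =>
      obtain ⟨ay, hay, hey, hqy⟩ := hy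
      obtain ⟨az, haz, hez, hqz⟩ := hz
      refine ⟨ay + az, add_mem hay haz, ?_, ?_⟩
      · rw [map_mul, hey, hez, ← QuotientGroup.mk_mul]
        congr 1
        apply Subtype.ext
        push_cast
        rw [inl_ofAdd_mul]
      · rw [map_mul, hqy, hqz, map_add]
        rfl
  | inv y _ hy =>
      obtain ⟨ay, hay, hey, hqy⟩ := hy
      refine ⟨-ay, neg_mem hay, ?_, ?_⟩
      · rw [map_inv, hey, ← QuotientGroup.mk_inv]
        congr 1
        apply Subtype.ext
        push_cast
        rw [inl_ofAdd_inv]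
      · rw [map_inv, hqy, map_neg]
        rfl

lemma ker_ge : (⁅Lsub H, Lsub H⁆ : Subgroup (chi H)) ≤ (eps H).ker := by
  rw [Subgroup.commutator_le]
  intro x hx y hy
  rw [MonoidHom.mem_ker, map_commutatorElement, commutatorElement_eq_one_iff_commute]
  obtain ⟨ax, _, hex, -⟩ := eps_on_L hx
  obtain ⟨ay, _, hey, -⟩ := eps_on_L hy
  rw [hex, hey, Commute, SemiconjBy, ← QuotientGroup.mk_mul, ← QuotientGroup.mk_mul]
  congr 1
  apply Subtype.ext
  push_cast
  rw [inl_ofAdd_mul, inl_ofAdd_mul, add_comm]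

noncomputable def piH (H : Type*) [Group H] : chi H →* H :=
  QuotientGroup.lift _ (Monoid.Coprod.lift (MonoidHom.id H) (MonoidHom.id H))
    (Subgroup.normalClosure_le_normal (by
      rintro x ⟨h, rfl⟩
      show _ ∈ MonoidHom.ker _
      rw [MonoidHom.mem_ker, map_commutatorElement,
        Monoid.Coprod.lift_apply_inl, Monoid.Coprod.lift_apply_inr]
      exact commutatorElement_self _))

lemma pi_iota (h : H) : piH H (chiIota H h) = h := rfl
lemma pi_psi (h : H) : piH H (chiPsi H h) = h := rfl

noncomputable def rho (H : Type*) [Group H] : (↥(Gsub H) ⧸ NsubG H) →* H :=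
  QuotientGroup.lift _ (SemidirectProduct.rightHom.comp (Gsub H).subtype) (by
    intro x hx
    have hx' : (x : Gtilde H) ∈ Nsub H := hx
    obtain ⟨b, _, hbe⟩ := hx'
    rw [MonoidHom.mem_ker, MonoidHom.comp_apply]
    show SemidirectProduct.rightHom (x : Gtilde H) = 1
    rw [← hbe, SemidirectProduct.rightHom_inl])

lemma rho_eps : (rho H).comp (eps H) = piH H := by
  apply QuotientGroup.monoidHom_ext
  apply Monoid.Coprod.hom_ext
  · ext h
    show rho H (eps H (chiIota H h)) = piH H (chiIota H h)
    rw [eps_iota, pi_iota]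
    show SemidirectProduct.rightHom ((SemidirectProduct.inr h : Gtilde H)) = h
    exact SemidirectProduct.rightHom_inr h
  · ext h
    show rho H (eps H (chiPsi H h)) = piH H (chiPsi H h)
    rw [eps_psi, pi_psi]
    show SemidirectProduct.rightHom
      ((cOne H)⁻¹ * SemidirectProduct.inr h * cOne H) = h
    simp

noncomputable def SS (H : Type*) [Group H] : Subgroup (chi H) where
  carrier := {w | w * (chiIota H (piH H w))⁻¹ ∈ Lsub H}
  one_mem' := by
    show (1 : chi H) * (chiIota H (piH H 1))⁻¹ ∈ Lsub H
    have e : (1 : chi H) * (chiIota H (piH H 1))⁻¹ = 1 := by simp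
    rw [e]
    exact (Lsub H).one_mem
  mul_mem' := by
    intro a b ha hb
    have e : (a * b) * (chiIota H (piH H (a * b)))⁻¹
        = (a * (chiIota H (piH H a))⁻¹) *
          (chiIota H (piH H a) * (b * (chiIota H (piH H b))⁻¹) * (chiIota H (piH H a))⁻¹) := by
      rw [map_mul, map_mul]
      group
    show _ ∈ Lsub H
    rw [e]
    exact mul_mem ha (Lsub_normal.conj_mem _ hb _)
  inv_mem' := by
    intro a ha
    have e : a⁻¹ * (chiIota H (piH H a⁻¹))⁻¹
        = a⁻¹ * (a * (chiIota H (piH H a))⁻¹)⁻¹ * (a⁻¹)⁻¹ := by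
      rw [map_inv, map_inv]
      group
    show _ ∈ Lsub H
    rw [e]
    exact Lsub_normal.conj_mem _ (inv_mem ha) _

lemma mem_L_of_pi_one {w : chi H} (hw : piH H w = 1) : w ∈ Lsub H := by
  have hSS : w ∈ SS H := by
    have : SS H = ⊤ := by
      rw [eq_top_iff, ← chi_eq_top]
      apply (Subgroup.closure_le _).mpr
      rintro x (⟨h, rfl⟩ | ⟨h, rfl⟩)
      · show chiIota H h * (chiIota H (piH H (chiIota H h)))⁻¹ ∈ Lsub H
        rw [pi_iota, mul_inv_cancel]
        exact (Lsub H).one_mem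
      · show chiPsi H h * (chiIota H (piH H (chiPsi H h)))⁻¹ ∈ Lsub H
        rw [pi_psi, psi_eq, mul_assoc, ← mul_assoc, lel_conj']
        exact lel_mem h
    rw [this]; trivial
  have h2 : w * (chiIota H (piH H w))⁻¹ ∈ Lsub H := hSS
  have e : w * (chiIota H (piH H w))⁻¹ = w := by rw [hw, map_one]; group
  rwa [e] at h2

lemma ker_le : (eps H).ker ≤ (⁅Lsub H, Lsub H⁆ : Subgroup (chi H)) := by
  intro w hw
  rw [MonoidHom.mem_ker] at hw
  have h1 : piH H w = 1 := by
    rw [← rho_eps, MonoidHom.comp_apply, hw, map_one]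
  have h2 : w ∈ Lsub H := mem_L_of_pi_one h1
  obtain ⟨a, ha, he, hq⟩ := eps_on_L h2
  rw [he] at hw
  have h3 : (⟨SemidirectProduct.inl (Multiplicative.ofAdd a), inl_mem_Gsub ha⟩ : ↥(Gsub H))
      ∈ NsubG H := (QuotientGroup.eq_one_iff _).mp hw
  have h4 : (SemidirectProduct.inl (Multiplicative.ofAdd a) : Gtilde H) ∈ Nsub H := h3
  obtain ⟨b, hb, hbe⟩ := h4
  have h5 : b = Multiplicative.ofAdd a := SemidirectProduct.inl_injective hbe
  have h6 : a ∈ ideal2 H := by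
    have : Multiplicative.toAdd b ∈ ideal2 H := hb
    rwa [h5, toAdd_ofAdd] at this
  have h7 : Phi H a = 0 := Phi_ideal2 h6
  have h8 : qmap H w = 1 := by
    rw [hq, h7]
    rfl
  exact (QuotientGroup.eq_one_iff _).mp h8

lemma VV_le_aug {a : MonoidAlgebra ℤ H}
    (ha : a ∈ AddSubgroup.closure {x : MonoidAlgebra ℤ H | ∃ h : H, x = MonoidAlgebra.of ℤ H h - 1}) :
    a ∈ augIdeal H := by
  induction ha using AddSubgroup.closure_induction with
  | mem y hy => exact Ideal.subset_span hy
  | zero => exact (augIdeal H).zero_mem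
  | add y z _ _ hy hz => exact add_mem hy hz
  | neg y _ hy => exact neg_mem hy

lemma aug_le_VV {a : MonoidAlgebra ℤ H} (ha : a ∈ augIdeal H) :
    a ∈ AddSubgroup.closure {x : MonoidAlgebra ℤ H | ∃ h : H, x = MonoidAlgebra.of ℤ H h - 1} := by
  set VV := AddSubgroup.closure {x : MonoidAlgebra ℤ H | ∃ h : H, x = MonoidAlgebra.of ℤ H h - 1}
    with hVV
  have hmul : ∀ (c x : MonoidAlgebra ℤ H), x ∈ VV → c * x ∈ VV := by
    intro c x hx
    induction hx using AddSubgroup.closure_induction generalizing c with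
    | mem y hy =>
        obtain ⟨h, rfl⟩ := hy
        induction c using MonoidAlgebra.induction_linear with
        | zero => simpa using AddSubgroup.zero_mem _
        | add f f' hf hf' => rw [add_mul]; exact AddSubgroup.add_mem _ hf hf'
        | single g b =>
            rw [single_eq_zsmul_of, smul_mul_assoc]
            refine AddSubgroup.zsmul_mem _ ?_ b
            have e : MonoidAlgebra.of ℤ H g * (MonoidAlgebra.of ℤ H h - 1)
                = (MonoidAlgebra.of ℤ H (g * h) - 1) - (MonoidAlgebra.of ℤ H g - 1) := by
              rw [map_mul]
              noncomm_ring
            rw [e]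
            exact AddSubgroup.sub_mem _ (AddSubgroup.subset_closure ⟨g * h, rfl⟩)
              (AddSubgroup.subset_closure ⟨g, rfl⟩)
    | zero => simpa using AddSubgroup.zero_mem _
    | add y z _ _ hy hz => rw [mul_add]; exact AddSubgroup.add_mem _ (hy c) (hz c)
    | neg y _ hy => rw [mul_neg]; exact AddSubgroup.neg_mem _ (hy c)
  have : augIdeal H ≤ {
      carrier := VV,
      add_mem' := fun hx hy => AddSubgroup.add_mem _ hx hy,
      zero_mem' := AddSubgroup.zero_mem _,
      smul_mem' := fun c x hx => by simpa [smul_eq_mul] using hmul c x hx :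
        Submodule (MonoidAlgebra ℤ H) (MonoidAlgebra ℤ H)} := by
    rw [augIdeal, Ideal.span_le]
    rintro x ⟨h, rfl⟩
    exact AddSubgroup.subset_closure ⟨h, rfl⟩
  exact this ha

lemma inl_mem_range {a : MonoidAlgebra ℤ H} (ha : a ∈ augIdeal H)
    (hg : (SemidirectProduct.inl (Multiplicative.ofAdd a) : Gtilde H) ∈ Gsub H) :
    (QuotientGroup.mk (⟨SemidirectProduct.inl (Multiplicative.ofAdd a), hg⟩ : ↥(Gsub H))
      : ↥(Gsub H) ⧸ NsubG H) ∈ (eps H).range := by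
  have ha' := aug_le_VV ha
  induction ha' using AddSubgroup.closure_induction with
  | mem y hy =>
      obtain ⟨h, rfl⟩ := hy
      refine ⟨(lel h)⁻¹, ?_⟩
      rw [map_inv, eps_lel, ← QuotientGroup.mk_inv]
      congr 1
      apply Subtype.ext
      push_cast
      rw [inl_ofAdd_inv, neg_sub]
  | zero =>
      have e : (⟨SemidirectProduct.inl (Multiplicative.ofAdd (0 : MonoidAlgebra ℤ H)), hg⟩
          : ↥(Gsub H)) = 1 := by
        apply Subtype.ext
        show SemidirectProduct.inl (Multiplicative.ofAdd (0 : MonoidAlgebra ℤ H)) = 1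
        rw [ofAdd_zero, map_one]
      rw [e]
      exact (eps H).range.one_mem
  | add y z hy' hz' hy hz =>
      have e : (⟨SemidirectProduct.inl (Multiplicative.ofAdd (y + z)), hg⟩ : ↥(Gsub H))
          = ⟨_, inl_mem_Gsub (VV_le_aug hy')⟩ * ⟨_, inl_mem_Gsub (VV_le_aug hz')⟩ := by
        apply Subtype.ext
        push_cast
        rw [inl_ofAdd_mul]
      rw [e, QuotientGroup.mk_mul]
      exact mul_mem (hy (VV_le_aug hy') (inl_mem_Gsub (VV_le_aug hy')))
        (hz (VV_le_aug hz') (inl_mem_Gsub (VV_le_aug hz')))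
  | neg y hy' hy =>
      have e : (⟨SemidirectProduct.inl (Multiplicative.ofAdd (-y)), hg⟩ : ↥(Gsub H))
          = (⟨_, inl_mem_Gsub (VV_le_aug hy')⟩ : ↥(Gsub H))⁻¹ := by
        apply Subtype.ext
        push_cast
        rw [inl_ofAdd_inv]
      rw [e, QuotientGroup.mk_inv]
      exact inv_mem (hy (VV_le_aug hy') (inl_mem_Gsub (VV_le_aug hy')))

lemma mk_mem_range {x : Gtilde H}
    (hx' : x ∈ Subgroup.closure
      ({y | ∃ a ∈ augIdeal H, y = SemidirectProduct.inl (Multiplicative.ofAdd a)} ∪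
       {y : Gtilde H | ∃ h : H, y = SemidirectProduct.inr h})) :
    ∀ (hx : x ∈ Gsub H),
      (QuotientGroup.mk (⟨x, hx⟩ : ↥(Gsub H)) : ↥(Gsub H) ⧸ NsubG H) ∈ (eps H).range := by
  induction hx' using Subgroup.closure_induction with
  | mem y hy =>
      intro hx
      rcases hy with ⟨a, ha, rfl⟩ | ⟨h, rfl⟩
      · exact inl_mem_range ha hx
      · exact ⟨chiIota H h, by rw [eps_iota]⟩
  | one =>
      intro hx
      rw [show ((⟨(1 : Gtilde H), hx⟩ : ↥(Gsub H))) = 1 from rfl]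
      exact (eps H).range.one_mem
  | mul y z hy' hz' hy hz =>
      intro hx
      have hyG : y ∈ Gsub H := hy'
      have hzG : z ∈ Gsub H := hz'
      rw [show ((⟨y * z, hx⟩ : ↥(Gsub H))) = ⟨y, hyG⟩ * ⟨z, hzG⟩ from rfl,
        QuotientGroup.mk_mul]
      exact mul_mem (hy hyG) (hz hzG)
  | inv y hy' hy =>
      intro hx
      have hyG : y ∈ Gsub H := hy'
      rw [show ((⟨y⁻¹, hx⟩ : ↥(Gsub H))) = (⟨y, hyG⟩ : ↥(Gsub H))⁻¹ from rfl,
        QuotientGroup.mk_inv]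
      exact inv_mem (hy hyG)

lemma eps_surjective : Function.Surjective (eps H) := by
  rw [← MonoidHom.range_eq_top, eq_top_iff]
  rintro c -
  induction c using QuotientGroup.induction_on with
  | H u =>
    obtain ⟨x, hx⟩ := u
    exact mk_mem_range hx hx

end FinalSection

/-- The assignment h ↦ N(0,h), h^ψ ↦ N(0,h)^{(1,1)} extends to an epimorphism
ε : χ(H) → G/N whose kernel is the derived subgroup L(H)′; moreover N is
normal in G. -/
theorem stmt_6 (H : Type*) [Group H] :
    (NsubG H).Normal ∧
    ∃ ε : chi H →* ↥(Gsub H) ⧸ NsubG H,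
      Function.Surjective ε ∧
      (∀ h : H, ε (chiIota H h) =
        QuotientGroup.mk ⟨SemidirectProduct.inr h, inr_mem_Gsub H h⟩) ∧
      (∀ h : H, ε (chiPsi H h) =
        QuotientGroup.mk
          ⟨(SemidirectProduct.inl
              (Multiplicative.ofAdd (1 : MonoidAlgebra ℤ H)))⁻¹ *
            SemidirectProduct.inr h *
            SemidirectProduct.inl
              (Multiplicative.ofAdd (1 : MonoidAlgebra ℤ H)),
            conj_mem_Gsub H h⟩) ∧
      ε.ker = ⁅Lsub H, Lsub H⁆ := by
  refine ⟨NsubG_normal H, eps H, eps_surjective, eps_iota, eps_psi, le_antisymm ker_le ker_ge⟩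
end

section
/- Let H be a group and T a transversal for the derived subgroup H′ in H (a set of coset representatives of H′ in H). Then R(H) equals the subgroup of χ(H) generated by all conjugates by elements of T of the elements [h₁, h₂^ψ]^{h₃} · [h₁^{h₃}, (h₂^{h₃})^ψ]⁻¹, for h₁, h₂, h₃ ∈ H. -/
open Subgroup
open scoped commutatorElement

namespace ChiAux

section cclemmas
variable {G : Type*} [Group G] (g h x y z : G)

/-- right conjugation -/
def cj (g x : G) : G := g⁻¹ * x * g
/-- old-style commutator -/
def cc (x y : G) : G := x⁻¹ * y⁻¹ * x * y

@[simp] theorem cj_mul : cj g (x * y) = cj g x * cj g y := by simp only [cj]; group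
@[simp] theorem cj_inv : cj g x⁻¹ = (cj g x)⁻¹ := by simp only [cj]; group
@[simp] theorem cj_one_arg : cj g (1 : G) = 1 := by simp [cj]
@[simp] theorem cj_one : cj (1 : G) x = x := by simp [cj]
theorem cj_cj : cj h (cj g x) = cj (g * h) x := by simp only [cj]; group
theorem cj_cancel : cj g⁻¹ (cj g x) = x := by simp only [cj]; group
theorem cj_cancel' : cj g (cj g⁻¹ x) = x := by simp only [cj]; group
theorem cj_inj {g x y : G} (h : cj g x = cj g y) : x = y := by
  have := congrArg (cj g⁻¹) h; rwa [cj_cancel, cj_cancel] at this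
theorem cj_cc : cj g (cc x y) = cc (cj g x) (cj g y) := by simp only [cj, cc]; group
theorem cc_mul_left : cc (x * y) z = cj y (cc x z) * cc y z := by simp only [cj, cc]; group
theorem cc_mul_right : cc x (y * z) = cc x z * cj z (cc x y) := by simp only [cj, cc]; group
theorem cc_inv_rev : (cc x y)⁻¹ = cc y x := by simp only [cc]; group
theorem cc_inv_left : cc x⁻¹ y = (cj x⁻¹ (cc x y))⁻¹ := by simp only [cj, cc]; group
theorem cc_inv_right : cc x y⁻¹ = (cj y⁻¹ (cc x y))⁻¹ := by simp only [cj, cc]; group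
theorem commute_cc_eq_one {x y : G} (h : Commute x y) : cc x y = 1 := by
  simp only [cc]; rw [mul_assoc, h.eq]; group
theorem commute_of_cc_eq_one {x y : G} (h : cc x y = 1) : Commute x y := by
  have : y * x * cc x y = y * x := by rw [h, mul_one]
  simp only [cc] at this
  unfold Commute SemiconjBy
  calc x * y = (y * x) * (x⁻¹ * y⁻¹ * x * y) := by group
  _ = y * x := this
theorem cj_eq_self_of_commute {g x : G} (hc : Commute x g) : cj g x = x := by
  unfold cj; rw [mul_assoc, hc.eq, ← mul_assoc]; group
theorem commute_cj {g x y : G} (hc : Commute x (cj g⁻¹ y)) : Commute (cj g x) y := by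
  have := congrArg (cj g) (commute_cc_eq_one hc)
  rw [cj_cc, cj_cancel', cj_one_arg] at this
  exact commute_of_cc_eq_one this
theorem cc_cj_left : cc (cj g x) y = cj g (cc x (cj g⁻¹ y)) := by
  rw [cj_cc, cj_cancel']
theorem cc_cj_right : cc x (cj g y) = cj g (cc (cj g⁻¹ x) y) := by
  rw [cj_cc, cj_cancel']
/-- mathlib bracket vs cc -/
theorem bracket_eq_cc : ⁅x, y⁆ = cc x⁻¹ y⁻¹ := by
  simp only [cc, commutatorElement_def]; group
theorem cc_eq_bracket : cc x y = ⁅x⁻¹, y⁻¹⁆ := by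
  simp only [cc, commutatorElement_def]; group
/-- Hall–Witt identity, old style -/
theorem hall_witt :
    cj y (cc (cc x y⁻¹) z) * cj z (cc (cc y z⁻¹) x) * cj x (cc (cc z x⁻¹) y) = 1 := by
  simp only [cj, cc]; group

end cclemmas

end ChiAux

namespace ChiAux
variable {H : Type*} [Group H]

local notation "ii" => chiIota H
local notation "pp" => chiPsi H

noncomputable def lam (h : H) : chi H := (ii h)⁻¹ * pp h

theorem comm0 (h : H) : Commute (ii h) (pp h) := by
  rw [← commutatorElement_eq_one_iff_commute]
  have h1 : (⁅(Monoid.Coprod.inl h : Monoid.Coprod H H), Monoid.Coprod.inr h⁆)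
      ∈ Subgroup.normalClosure (chiRel H) := Subgroup.subset_normalClosure ⟨h, rfl⟩
  have h2 : ⁅(ii) h, (pp) h⁆
      = QuotientGroup.mk' _ (⁅(Monoid.Coprod.inl h : Monoid.Coprod H H), Monoid.Coprod.inr h⁆) := by
    rw [map_commutatorElement]; rfl
  rw [h2]
  rwa [← QuotientGroup.eq_one_iff] at h1

theorem cc0 (h : H) : cc ((ii) h) ((pp) h) = 1 := commute_cc_eq_one (comm0 h)

@[simp] theorem lam_one : lam (1 : H) = 1 := by simp [lam]

theorem lam_mem (h : H) : lam h ∈ Lsub H := Subgroup.subset_closure ⟨h, rfl⟩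

theorem pp_eq (h : H) : (pp) h = (ii) h * lam h := by simp [lam]

theorem ii_inv (h : H) : ((ii) h)⁻¹ = (ii) h⁻¹ := (map_inv _ _).symm
theorem pp_inv (h : H) : ((pp) h)⁻¹ = (pp) h⁻¹ := (map_inv _ _).symm

theorem cj_lam_i (x g : H) : cj ((ii) g) (lam x) = lam (x * g) * (lam g)⁻¹ := by
  simp only [cj, lam, map_mul]; group

theorem cj_lam_p (x g : H) : cj ((pp) g) (lam x) = (lam g)⁻¹ * lam (x * g) := by
  simp only [cj, lam, map_mul]; group

theorem gens_top : Subgroup.closure (Set.range (ii) ∪ Set.range (pp)) = ⊤ := by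
  have key : ∀ q : Monoid.Coprod H H, QuotientGroup.mk' (Subgroup.normalClosure (chiRel H)) q
      ∈ Subgroup.closure (Set.range (ii) ∪ Set.range (pp)) := by
    intro q
    induction q using Monoid.Coprod.induction_on with
    | inl m => exact Subgroup.subset_closure (Or.inl ⟨m, rfl⟩)
    | inr m => exact Subgroup.subset_closure (Or.inr ⟨m, rfl⟩)
    | mul x y hx hy => rw [map_mul]; exact mul_mem hx hy
  rw [eq_top_iff]
  intro x _
  obtain ⟨q, rfl⟩ := QuotientGroup.mk'_surjective (Subgroup.normalClosure (chiRel H)) x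
  exact key q

/-- key helper: conjugation of a closure is controlled by generators -/
theorem cj_mem_of_gen {G : Type*} [Group G] {S : Set G} {K : Subgroup G} (c : G)
    (h : ∀ x ∈ S, cj c x ∈ K) : ∀ k ∈ Subgroup.closure S, cj c k ∈ K := by
  intro k hk
  induction hk using Subgroup.closure_induction with
  | mem x hx => exact h x hx
  | one => rw [cj_one_arg]; exact one_mem K
  | mul x y hx hy ihx ihy => rw [cj_mul]; exact mul_mem ihx ihy
  | inv x hx ihx => rw [cj_inv]; exact inv_mem ihx

/-- normality criterion via generators of chi -/
theorem normal_of_cj_gen (K : Subgroup (chi H))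
    (hi : ∀ h : H, ∀ k ∈ K, cj ((ii) h) k ∈ K)
    (hp : ∀ h : H, ∀ k ∈ K, cj ((pp) h) k ∈ K) : K.Normal := by
  have main : ∀ g : chi H, ∀ k ∈ K, cj g k ∈ K := by
    have : ∀ g ∈ Subgroup.closure (Set.range (ii) ∪ Set.range (pp)),
        (∀ k ∈ K, cj g k ∈ K) ∧ (∀ k ∈ K, cj g⁻¹ k ∈ K) := by
      intro g hg
      induction hg using Subgroup.closure_induction with
      | mem x hx =>
        rcases hx with ⟨a, rfl⟩ | ⟨a, rfl⟩
        · exact ⟨hi a, by rw [ii_inv]; exact hi a⁻¹⟩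
        · exact ⟨hp a, by rw [pp_inv]; exact hp a⁻¹⟩
      | one => constructor <;> (intro k hk; simp [cj_one]; exact hk)
      | mul x y hx hy ihx ihy =>
        refine ⟨fun k hk => ?_, fun k hk => ?_⟩
        · rw [← cj_cj]; exact ihy.1 _ (ihx.1 k hk)
        · rw [mul_inv_rev, ← cj_cj]; exact ihx.2 _ (ihy.2 k hk)
      | inv x hx ihx => exact ⟨ihx.2, by rw [inv_inv]; exact ihx.1⟩
    intro g
    exact (this g (by rw [gens_top]; trivial)).1
  constructor
  intro n hn g
  have : g * n * g⁻¹ = cj g⁻¹ n := by simp [cj]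
  rw [this]
  exact main g⁻¹ n hn

theorem L_normal : (Lsub H).Normal := by
  apply normal_of_cj_gen
  · intro h k hk
    refine cj_mem_of_gen _ ?_ k hk
    rintro x ⟨a, rfl⟩
    have : cj ((ii) h) (lam a) = lam (a * h) * (lam h)⁻¹ := cj_lam_i a h
    rw [show ((ii) a)⁻¹ * (pp) a = lam a from rfl, this]
    exact mul_mem (lam_mem _) (inv_mem (lam_mem _))
  · intro h k hk
    refine cj_mem_of_gen _ ?_ k hk
    rintro x ⟨a, rfl⟩
    rw [show ((ii) a)⁻¹ * (pp) a = lam a from rfl, cj_lam_p a h]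
    exact mul_mem (inv_mem (lam_mem _)) (lam_mem _)

theorem cc_mem_D (a b : H) : cc ((ii) a) ((pp) b) ∈ Dsub H := by
  rw [cc_eq_bracket, ii_inv, pp_inv]
  exact Subgroup.commutator_mem_commutator ⟨a⁻¹, rfl⟩ ⟨b⁻¹, rfl⟩

theorem D_normal : (Dsub H).Normal := by
  have hgen : Dsub H = Subgroup.closure
      {g | ∃ g₁ ∈ chiH H, ∃ g₂ ∈ chiHpsi H, ⁅g₁, g₂⁆ = g} :=
    Subgroup.commutator_def _ _
  apply normal_of_cj_gen
  · intro h k hk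
    rw [hgen] at hk
    refine cj_mem_of_gen _ ?_ k hk
    rintro x ⟨g₁, ⟨a, rfl⟩, g₂, ⟨b, rfl⟩, rfl⟩
    have hx : ⁅(ii) a, (pp) b⁆ = cc ((ii) a⁻¹) ((pp) b⁻¹) := by
      rw [bracket_eq_cc, ii_inv, pp_inv]
    rw [hx]
    have : cj ((ii) h) (cc ((ii) a⁻¹) ((pp) b⁻¹))
        = cc ((ii) (a⁻¹ * h)) ((pp) b⁻¹) * (cc ((ii) h) ((pp) b⁻¹))⁻¹ := by
      have e := cc_mul_left ((ii) a⁻¹) ((ii) h) ((pp) b⁻¹)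
      rw [← map_mul] at e
      -- e : cc (ii (a⁻¹*h)) (pp b⁻¹) = cj (ii h) (cc (ii a⁻¹) (pp b⁻¹)) * cc (ii h) (pp b⁻¹)
      rw [e]; group
    rw [this]
    exact mul_mem (cc_mem_D _ _) (inv_mem (cc_mem_D _ _))
  · intro h k hk
    rw [hgen] at hk
    refine cj_mem_of_gen _ ?_ k hk
    rintro x ⟨g₁, ⟨a, rfl⟩, g₂, ⟨b, rfl⟩, rfl⟩
    have hx : ⁅(ii) a, (pp) b⁆ = cc ((ii) a⁻¹) ((pp) b⁻¹) := by
      rw [bracket_eq_cc, ii_inv, pp_inv]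
    rw [hx]
    have : cj ((pp) h) (cc ((ii) a⁻¹) ((pp) b⁻¹))
        = (cc ((ii) a⁻¹) ((pp) h))⁻¹ * cc ((ii) a⁻¹) ((pp) (b⁻¹ * h)) := by
      have e := cc_mul_right ((ii) a⁻¹) ((pp) b⁻¹) ((pp) h)
      rw [← map_mul] at e
      rw [e]; group
    rw [this]
    exact mul_mem (inv_mem (cc_mem_D _ _)) (cc_mem_D _ _)

end ChiAux

namespace ChiAux
variable {H : Type*} [Group H]
local notation "ii" => chiIota H
local notation "pp" => chiPsi H

theorem commute_of_cj_eq {G : Type*} [Group G] {g x : G} (h : cj g x = x) : Commute x g := by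
  unfold cj at h
  unfold Commute SemiconjBy
  calc x * g = g * (g⁻¹ * x * g) := by group
  _ = g * x := by rw [h]

theorem lam_mul (u g : H) : lam (u * g) = cj ((ii) g) (lam u) * lam g := by
  simp only [lam, cj, map_mul]; group

theorem lemA (u v : H) :
    cj ((ii) v) (cc ((ii) u) ((pp) v)) * cj ((pp) v) (cc ((ii) v) ((pp) u)) = 1 := by
  have h := cc0 (u * v)
  rw [map_mul, map_mul, cc_mul_left, cc_mul_right, cc_mul_right] at h
  simp only [cc0, cj_one_arg, one_mul, mul_one] at h
  exact h

theorem A1 (u v : H) : cc ((ii) u) ((pp) v) = cj (lam v) (cc ((pp) u) ((ii) v)) := by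
  have h := lemA u v
  have hlam : lam v = (pp) v * ((ii) v)⁻¹ := (comm0 v).inv_left.eq
  rw [hlam, ← cj_cj]
  have h4 : cj ((ii) v) (cc ((ii) u) ((pp) v)) = (cj ((pp) v) (cc ((ii) v) ((pp) u)))⁻¹ :=
    inv_eq_iff_eq_inv.mp (mul_eq_one_iff_inv_eq.mp h)
  rw [← cj_inv, cc_inv_rev] at h4
  rw [← h4, cj_cancel]

theorem A2 (u v : H) : cc ((pp) u) ((ii) v) = cj (lam u) (cc ((ii) u) ((pp) v)) := by
  have h := lemA v u
  have hlam : lam u = (pp) u * ((ii) u)⁻¹ := (comm0 u).inv_left.eq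
  rw [hlam, ← cj_cj]
  have h4 : cj ((pp) u) (cc ((ii) u) ((pp) v)) = (cj ((ii) u) (cc ((ii) v) ((pp) u)))⁻¹ := by
    rw [← mul_eq_one_iff_inv_eq.mp h]
  rw [← cj_inv, cc_inv_rev] at h4
  rw [h4, cj_cancel]

theorem core1 (u v g : H) : Commute (cc ((ii) g) ((pp) v)) (cj ((ii) g) (lam u)) := by
  have e3 : (ii) g * lam (u * g) = lam u * (pp) g := by
    rw [lam_mul, pp_eq]; simp only [cj]; group
  have e1 : cc ((pp) (u * g)) ((ii) v)
      = cj (lam u * (pp) g) (cc ((ii) u) ((pp) v)) * cj (lam g) (cc ((ii) g) ((pp) v)) := by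
    rw [map_mul, cc_mul_left, A2 u v, A2 g v, cj_cj]
  have e2 : cc ((pp) (u * g)) ((ii) v)
      = cj (lam u * (pp) g) (cc ((ii) u) ((pp) v))
        * cj (lam g) (cj (cj ((ii) g) (lam u)) (cc ((ii) g) ((pp) v))) := by
    rw [A2 (u * g) v, map_mul, cc_mul_left, cj_mul, cj_cj, e3, cj_cj, ← lam_mul, ← cj_cj]
  have e4 := mul_left_cancel (e1.symm.trans e2)
  exact commute_of_cj_eq (cj_inj e4).symm

theorem core2 (u v : H) : Commute (cc ((ii) u) ((pp) v)) (lam u * lam v) := by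
  have h : cc ((ii) u) ((pp) v) = cj (lam u * lam v) (cc ((ii) u) ((pp) v)) := by
    rw [← cj_cj, ← A2 u v, ← A1 u v]
  exact commute_of_cj_eq h.symm

theorem commute_D_lam (g v h : H) : Commute (cc ((ii) g) ((pp) v)) (lam h) := by
  have s1 : ∀ w : H, Commute (cc ((ii) g) ((pp) v)) (lam w * (lam g)⁻¹) := by
    intro w
    have := core1 (w * g⁻¹) v g
    rwa [cj_lam_i, inv_mul_cancel_right] at this
  have s2 := core2 g v
  have s3 : Commute (cc ((ii) g) ((pp) v)) (lam v) := by
    have := ((s1 1).mul_right s2)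
    rwa [lam_one, one_mul, inv_mul_cancel_left] at this
  have hfin := ((s1 h).mul_right s2).mul_right s3.inv_right
  have he : lam h * (lam g)⁻¹ * (lam g * lam v) * (lam v)⁻¹ = lam h := by group
  rwa [he] at hfin

end ChiAux

set_option maxHeartbeats 1000000
namespace ChiAux
variable {H : Type*} [Group H]
local notation "ii" => chiIota H
local notation "pp" => chiPsi H

theorem cj_mem {G : Type*} [Group G] {K : Subgroup G} (hK : K.Normal) {x : G}
    (hx : x ∈ K) (g : G) : cj g x ∈ K := by
  have := hK.conj_mem x hx g⁻¹
  simpa [cj, mul_assoc] using this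

theorem cc_mem_right_of_normal {G : Type*} [Group G] {K : Subgroup G} (hK : K.Normal)
    (x : G) {y : G} (hy : y ∈ K) : cc x y ∈ K := by
  have e : cc x y = (cj x y)⁻¹ * y := by simp only [cc, cj]; group
  rw [e]
  exact mul_mem (inv_mem (cj_mem hK hy x)) hy

theorem cc_mem_left_of_normal {G : Type*} [Group G] {K : Subgroup G} (hK : K.Normal)
    {x : G} (hx : x ∈ K) (y : G) : cc x y ∈ K := by
  have e : cc x y = x⁻¹ * cj y x := by simp only [cc, cj]; group
  rw [e]
  exact mul_mem (inv_mem hx) (cj_mem hK hx y)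

theorem cj_eq_mul_cc {G : Type*} [Group G] (g x : G) : cj g x = x * cc x g := by
  simp only [cj, cc]; group

theorem D_comm_L : ∀ d ∈ Dsub H, ∀ y ∈ Lsub H, Commute d y := by
  have hgen : ∀ a b : H, ∀ y ∈ Lsub H, Commute (cc ((ii) a) ((pp) b)) y := by
    intro a b y hy
    induction hy using Subgroup.closure_induction with
    | mem x hx => obtain ⟨h, rfl⟩ := hx; exact commute_D_lam a b h
    | one => exact Commute.one_right _
    | mul x y hx hy ihx ihy => exact ihx.mul_right ihy
    | inv x hx ihx => exact ihx.inv_right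
  intro d hd
  rw [Dsub, Subgroup.commutator_def] at hd
  induction hd using Subgroup.closure_induction with
  | mem x hx =>
    obtain ⟨g₁, ⟨a, rfl⟩, g₂, ⟨b, rfl⟩, rfl⟩ := hx
    have e : ⁅(ii) a, (pp) b⁆ = cc ((ii) a⁻¹) ((pp) b⁻¹) := by
      rw [bracket_eq_cc, ii_inv, pp_inv]
    rw [e]; exact hgen a⁻¹ b⁻¹
  | one => exact fun y hy => Commute.one_left _
  | mul x y hx hy ihx ihy => exact fun z hz => (ihx z hz).mul_left (ihy z hz)
  | inv x hx ihx => exact fun z hz => (ihx z hz).inv_left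

theorem swapD (u v : H) : cc ((pp) u) ((ii) v) = cc ((ii) u) ((pp) v) := by
  rw [A2]; exact cj_eq_self_of_commute (commute_D_lam u v u)

theorem pconj_eq_iconj_onD (h : H) {d : chi H} (hd : d ∈ Dsub H) :
    cj ((pp) h) d = cj ((ii) h) d := by
  rw [pp_eq, ← cj_cj]
  exact cj_eq_self_of_commute
    (D_comm_L _ (cj_mem D_normal hd ((ii) h)) _ (lam_mem h))

noncomputable def dd (a b : H) : chi H := cc ((ii) a) ((pp) b)

noncomputable def rr (a b g : H) : chi H :=
  cj ((ii) g) (dd a b) * (dd (g⁻¹ * a * g) (g⁻¹ * b * g))⁻¹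

theorem dd_mem_D (a b : H) : dd a b ∈ Dsub H := cc_mem_D a b

theorem rr_mem_D (a b g : H) : rr a b g ∈ Dsub H :=
  mul_mem (cj_mem D_normal (dd_mem_D a b) _) (inv_mem (dd_mem_D _ _))

theorem cj_ii (g a : H) : cj ((ii) g) ((ii) a) = (ii) (g⁻¹ * a * g) := by
  simp only [cj, map_mul, ← ii_inv]

theorem rr_cocycle (a b g h : H) :
    cj ((ii) h) (rr a b g) = rr a b (g * h) * (rr (g⁻¹ * a * g) (g⁻¹ * b * g) h)⁻¹ := by
  simp only [rr, cj_mul, cj_inv, cj_cj, ← map_mul]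
  have e1 : (g * h)⁻¹ * a * (g * h) = h⁻¹ * (g⁻¹ * a * g) * h := by group
  have e2 : (g * h)⁻¹ * b * (g * h) = h⁻¹ * (g⁻¹ * b * g) * h := by group
  rw [e1, e2]
  group

theorem cjlam_inv (g : H) : cj (((ii) g)⁻¹) (lam g) = (lam g⁻¹)⁻¹ := by
  rw [ii_inv]
  have := cj_lam_i g g⁻¹
  rw [mul_inv_cancel, lam_one] at this
  rw [this, one_mul]

theorem rr_eq (a b g : H) :
    rr a b g = cj ((ii) g) ((cc ((ii) a) (cc ((pp) b) ((lam g⁻¹)⁻¹)))⁻¹) := by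
  have hB : (pp) (g⁻¹ * b * g) = cj (lam g) (cj ((ii) g) ((pp) b)) := by
    rw [cj_cj, ← pp_eq]
    simp only [cj, map_mul, ← pp_inv]
  set B := cj ((ii) g) ((pp) b) with hBdef
  set n := cc B (lam g) with hn
  have hA : (ii) (g⁻¹ * a * g) = cj ((ii) g) ((ii) a) := (cj_ii g a).symm
  have hdd' : dd (g⁻¹ * a * g) (g⁻¹ * b * g) = cc (cj ((ii) g) ((ii) a)) (B * n) := by
    rw [dd, hA, hB, cj_eq_mul_cc (lam g) B]
  have hccAB : cc (cj ((ii) g) ((ii) a)) B = cj ((ii) g) (dd a b) := by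
    rw [hBdef, ← cj_cc, dd]
  have hsplit : cc (cj ((ii) g) ((ii) a)) (B * n)
      = cc (cj ((ii) g) ((ii) a)) n * cc (cj ((ii) g) ((ii) a)) B := by
    rw [cc_mul_right]
    congr 1
    apply cj_eq_self_of_commute
    have h1 : cc (cj ((ii) g) ((ii) a)) B ∈ Dsub H := by
      rw [hccAB]; exact cj_mem D_normal (dd_mem_D a b) _
    have h2 : n ∈ Lsub H := cc_mem_right_of_normal L_normal B (lam_mem g)
    exact D_comm_L _ h1 _ h2
  have hfin : rr a b g = (cc (cj ((ii) g) ((ii) a)) n)⁻¹ := by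
    rw [rr, hdd', hsplit, hccAB]
    group
  have hn2 : n = cj ((ii) g) (cc ((pp) b) ((lam g⁻¹)⁻¹)) := by
    rw [hn, hBdef, cc_cj_left, cjlam_inv]
  rw [hfin, hn2, ← cj_cc, cj_inv]

theorem rr_mem_L (a b g : H) : rr a b g ∈ Lsub H := by
  rw [rr_eq]
  apply cj_mem L_normal
  apply inv_mem
  apply cc_mem_right_of_normal L_normal
  apply cc_mem_right_of_normal L_normal
  exact inv_mem (lam_mem g⁻¹)

/-- χ-identity: cc ((pb)^{ih}) (lam h) = cc pb (lam h) -/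
theorem cc_p_lam_stable (b h : H) :
    cc (cj ((ii) h) ((pp) b)) (lam h) = cc ((pp) b) (lam h) := by
  rw [cj_eq_mul_cc ((ii) h) ((pp) b), cc_mul_left]
  have hd : cc ((pp) b) ((ii) h) ∈ Dsub H := by rw [swapD]; exact cc_mem_D b h
  have hX : cc ((pp) b) (lam h) ∈ Lsub H :=
    cc_mem_right_of_normal L_normal _ (lam_mem h)
  rw [commute_cc_eq_one ((D_comm_L _ hd _ (lam_mem h)))]
  rw [cj_eq_self_of_commute ((D_comm_L _ hd _ hX).symm)]
  rw [mul_one]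

end ChiAux

namespace ChiAux
variable {H : Type*} [Group H]
local notation "ii" => chiIota H
local notation "pp" => chiPsi H
local notation "Esub" => (⁅chiH H, Lsub H⁆ : Subgroup (chi H))

theorem Commute.cj_right {G : Type*} [Group G] {x y g : G}
    (hy : Commute x y) (hg : Commute x g) : Commute x (cj g y) :=
  (hg.inv_right.mul_right hy).mul_right hg

theorem cc_mem_E {x y : chi H} (hx : x ∈ chiH H) (hy : y ∈ Lsub H) : cc x y ∈ Esub := by
  rw [cc_eq_bracket]
  exact Subgroup.commutator_mem_commutator (inv_mem hx) (inv_mem hy)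

theorem E_le_L : Esub ≤ Lsub H := by
  haveI := (L_normal (H := H))
  exact Subgroup.commutator_le_right _ _

theorem Egen_eq : Esub = Subgroup.closure
    {g | ∃ g₁ ∈ chiH H, ∃ g₂ ∈ Lsub H, ⁅g₁, g₂⁆ = g} := Subgroup.commutator_def _ _

theorem E_cj_i (h : H) : ∀ k ∈ Esub, cj ((ii) h) k ∈ Esub := by
  intro k hk
  rw [Egen_eq] at hk
  refine cj_mem_of_gen _ ?_ k hk
  rintro x ⟨g₁, hg₁, g₂, hg₂, rfl⟩
  rw [bracket_eq_cc, cj_cc]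
  exact cc_mem_E
    (mul_mem (mul_mem (inv_mem ⟨h, rfl⟩) (inv_mem hg₁)) ⟨h, rfl⟩)
    (cj_mem L_normal (inv_mem hg₂) _)

theorem E_cj_L : ∀ z ∈ Lsub H, ∀ k ∈ Esub, cj z k ∈ Esub := by
  intro z hz k hk
  rw [Egen_eq] at hk
  refine cj_mem_of_gen _ ?_ k hk
  rintro x ⟨g₁, hg₁, g₂, hg₂, rfl⟩
  rw [bracket_eq_cc]
  have e : cj z (cc g₁⁻¹ g₂⁻¹) = (cc g₁⁻¹ z)⁻¹ * cc g₁⁻¹ (g₂⁻¹ * z) := by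
    rw [cc_mul_right]; group
  rw [e]
  exact mul_mem (inv_mem (cc_mem_E (inv_mem hg₁) hz))
    (cc_mem_E (inv_mem hg₁) (mul_mem (inv_mem hg₂) hz))

theorem E_cj_p (h : H) : ∀ k ∈ Esub, cj ((pp) h) k ∈ Esub := by
  intro k hk
  rw [pp_eq, ← cj_cj]
  exact E_cj_L _ (lam_mem h) _ (E_cj_i h k hk)

theorem cc_mem_R {x y : chi H} (hx : x ∈ Esub) (hy : y ∈ chiHpsi H) :
    cc x y ∈ Rsub H := by
  rw [cc_eq_bracket]
  exact Subgroup.commutator_mem_commutator (inv_mem hx) (inv_mem hy)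

theorem cj_pp (g b : H) : cj ((pp) g) ((pp) b) = (pp) (g⁻¹ * b * g) := by
  simp only [cj, map_mul, ← pp_inv]

theorem R_normal : (Rsub H).Normal := by
  have hgen : Rsub H = Subgroup.closure
      {g | ∃ g₁ ∈ Esub, ∃ g₂ ∈ chiHpsi H, ⁅g₁, g₂⁆ = g} := Subgroup.commutator_def _ _
  apply normal_of_cj_gen
  · intro h k hk
    rw [hgen] at hk
    refine cj_mem_of_gen _ ?_ k hk
    rintro x ⟨g₁, hg₁, g₂, ⟨b, rfl⟩, rfl⟩
    rw [bracket_eq_cc, cj_cc, pp_inv]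
    -- cj (ii h) (pp b⁻¹) = pp b⁻¹ * cc (pp b⁻¹) (ii h)
    rw [cj_eq_mul_cc ((ii) h) ((pp) b⁻¹), cc_mul_right]
    have hd : cc ((pp) b⁻¹) ((ii) h) ∈ Dsub H := by rw [swapD]; exact cc_mem_D _ _
    have hx' : cj ((ii) h) g₁⁻¹ ∈ Esub := E_cj_i h _ (inv_mem hg₁)
    have hxL : (cj ((ii) h) g₁⁻¹) ∈ Lsub H := E_le_L hx'
    rw [commute_cc_eq_one ((D_comm_L _ hd _ hxL).symm)]
    have hccR : cc (cj ((ii) h) g₁⁻¹) ((pp) b⁻¹) ∈ Rsub H := cc_mem_R hx' ⟨b⁻¹, rfl⟩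
    have hccL : cc (cj ((ii) h) g₁⁻¹) ((pp) b⁻¹) ∈ Lsub H :=
      cc_mem_left_of_normal L_normal hxL _
    rw [cj_eq_self_of_commute ((D_comm_L _ hd _ hccL).symm)]
    rw [one_mul]
    exact hccR
  · intro h k hk
    rw [hgen] at hk
    refine cj_mem_of_gen _ ?_ k hk
    rintro x ⟨g₁, hg₁, g₂, ⟨b, rfl⟩, rfl⟩
    rw [bracket_eq_cc, cj_cc, pp_inv, cj_pp]
    exact cc_mem_R (E_cj_p h _ (inv_mem hg₁)) ⟨_, rfl⟩

/-- Hall-Witt step : [ia, [pb, y]] ∈ R for y ∈ L -/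
theorem hw_step (a b : H) {y : chi H} (hy : y ∈ Lsub H) :
    cc ((ii) a) (cc ((pp) b) y) ∈ Rsub H := by
  have hw := hall_witt ((pp) b) y⁻¹ ((ii) a)
  rw [inv_inv] at hw
  -- t3 = cj (pp b) (cc (cc (ii a) ((pp) b)⁻¹) y⁻¹) ; inner cc is in D, y⁻¹ ∈ L
  have ht3 : cc (cc ((ii) a) ((pp) b)⁻¹) y⁻¹ = 1 := by
    apply commute_cc_eq_one
    have : cc ((ii) a) ((pp) b)⁻¹ ∈ Dsub H := by rw [pp_inv]; exact cc_mem_D _ _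
    exact D_comm_L _ this _ (inv_mem hy)
  rw [ht3, cj_one_arg, mul_one] at hw
  -- t2 : cc (cc y⁻¹ (ii a)⁻¹) (pp b) ∈ R
  have hmem : cc y⁻¹ ((ii) a)⁻¹ ∈ ⁅chiH H, Lsub H⁆ := by
    have e : cc y⁻¹ ((ii) a)⁻¹ = ⁅y, (ii) a⁆ := by rw [bracket_eq_cc]
    rw [e, Subgroup.commutator_comm]
    exact Subgroup.commutator_mem_commutator hy ⟨a, rfl⟩
  have ht2 : cj ((ii) a) (cc (cc y⁻¹ ((ii) a)⁻¹) ((pp) b)) ∈ Rsub H :=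
    cj_mem R_normal (cc_mem_R hmem ⟨b, rfl⟩) _
  have ht1 : cj y⁻¹ (cc (cc ((pp) b) y) ((ii) a)) ∈ Rsub H := by
    have h1 : cj y⁻¹ (cc (cc ((pp) b) y) ((ii) a))
        = (cj ((ii) a) (cc (cc y⁻¹ ((ii) a)⁻¹) ((pp) b)))⁻¹ := mul_eq_one_iff_eq_inv.mp hw
    rw [h1]; exact inv_mem ht2
  have hX : cc (cc ((pp) b) y) ((ii) a) ∈ Rsub H := by
    have h2 := cj_mem R_normal ht1 y
    rwa [cj_cancel'] at h2
  rw [← cc_inv_rev]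
  exact inv_mem hX

theorem rr_mem_R (a b g : H) : rr a b g ∈ Rsub H := by
  rw [rr_eq]
  exact cj_mem R_normal (inv_mem (hw_step a b (inv_mem (lam_mem g⁻¹)))) _

end ChiAux

namespace ChiAux
variable {H : Type*} [Group H]
local notation "ii" => chiIota H
local notation "pp" => chiPsi H

noncomputable def Msub (H : Type*) [Group H] : Subgroup (chi H) :=
  Subgroup.closure {x : chi H | ∃ a b g : H, x = rr a b g}

theorem rr_mem_M (a b g : H) : rr a b g ∈ Msub H :=
  Subgroup.subset_closure ⟨a, b, g, rfl⟩

theorem M_le_R : Msub H ≤ Rsub H := by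
  rw [Msub, Subgroup.closure_le]
  rintro x ⟨a, b, g, rfl⟩
  exact rr_mem_R a b g

theorem rr_comm_L (a b g : H) : ∀ y ∈ Lsub H, Commute (rr a b g) y :=
  fun y hy => D_comm_L _ (rr_mem_D a b g) y hy

theorem rr_comm_D (a b g : H) : ∀ d ∈ Dsub H, Commute (rr a b g) d :=
  fun d hd => (D_comm_L d hd _ (rr_mem_L a b g)).symm

theorem rr_comm_comm (a b g : H) : ∀ c ∈ commutator H, Commute (rr a b g) ((ii) c) := by
  set ρ := rr a b g with hρ
  have key : commutator H ≤ Subgroup.comap (chiIota H) (Subgroup.centralizer {ρ}) := by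
    rw [commutator_def, Subgroup.commutator_le]
    intro x _ y _
    rw [Subgroup.mem_comap, Subgroup.mem_centralizer_iff]
    rintro z rfl
    -- goal : ρ * (ii ⁅x,y⁆) = (ii ⁅x,y⁆) * ρ   (order: h * g = g * h for h ∈ {ρ})
    suffices hcm : Commute ρ ((ii) ⁅x, y⁆) by exact hcm.eq
    have e0 : (ii) ⁅x, y⁆ = ⁅(ii) x, (ii) y⁆ := map_commutatorElement _ _ _
    have e1 : ⁅(ii) x, (ii) y⁆ = cc ((ii) x⁻¹) ((ii) y⁻¹) := by
      rw [bracket_eq_cc, ii_inv, ii_inv]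
    have e2 : cc ((ii) x⁻¹) ((ii) y⁻¹)
        = cj (lam y⁻¹)⁻¹ ((cc ((ii) x⁻¹) (lam y⁻¹))⁻¹ * cc ((ii) x⁻¹) ((pp) y⁻¹)) := by
      have e3 : cc ((ii) x⁻¹) ((pp) y⁻¹)
          = cc ((ii) x⁻¹) (lam y⁻¹) * cj (lam y⁻¹) (cc ((ii) x⁻¹) ((ii) y⁻¹)) := by
        rw [← cc_mul_right, ← pp_eq]
      rw [e3]
      rw [← mul_assoc, inv_mul_cancel, one_mul, cj_cancel]
    rw [e0, e1, e2]
    have hU : Commute ρ (cc ((ii) x⁻¹) (lam y⁻¹))⁻¹ :=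
      (rr_comm_L a b g _ (cc_mem_right_of_normal L_normal _ (lam_mem y⁻¹))).inv_right
    have hV : Commute ρ (cc ((ii) x⁻¹) ((pp) y⁻¹)) := rr_comm_D a b g _ (cc_mem_D _ _)
    have hg : Commute ρ (lam y⁻¹)⁻¹ := (rr_comm_L a b g _ (lam_mem y⁻¹)).inv_right
    exact Commute.cj_right (hU.mul_right hV) hg
  intro c hc
  have := key hc
  rw [Subgroup.mem_comap, Subgroup.mem_centralizer_iff] at this
  exact this ρ rfl

theorem M_normal : (Msub H).Normal := by
  apply normal_of_cj_gen
  · intro h k hk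
    refine cj_mem_of_gen _ ?_ k hk
    rintro x ⟨a, b, g, rfl⟩
    rw [rr_cocycle]
    exact mul_mem (rr_mem_M _ _ _) (inv_mem (rr_mem_M _ _ _))
  · intro h k hk
    refine cj_mem_of_gen _ ?_ k hk
    rintro x ⟨a, b, g, rfl⟩
    rw [pconj_eq_iconj_onD h (rr_mem_D a b g), rr_cocycle]
    exact mul_mem (rr_mem_M _ _ _) (inv_mem (rr_mem_M _ _ _))

end ChiAux

namespace ChiAux
variable {H : Type*} [Group H]
local notation "ii" => chiIota H
local notation "pp" => chiPsi H

def Sset (H : Type*) [Group H] (T : Set H) : Set (chi H) :=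
  {x : chi H | ∃ h₁ h₂ h₃ : H, ∃ t ∈ T,
    x = (chiIota H t)⁻¹ *
          (((chiIota H h₃)⁻¹ * ⁅chiIota H h₁, chiPsi H h₂⁆ * chiIota H h₃) *
            ⁅chiIota H (h₃⁻¹ * h₁ * h₃), chiPsi H (h₃⁻¹ * h₂ * h₃)⁆⁻¹) *
          chiIota H t}

noncomputable def Nsub (T : Set H) : Subgroup (chi H) := Subgroup.closure (Sset H T)

theorem stmt_elt (h₁ h₂ h₃ t : H) :
    (chiIota H t)⁻¹ *
      (((chiIota H h₃)⁻¹ * ⁅chiIota H h₁, chiPsi H h₂⁆ * chiIota H h₃) *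
        ⁅chiIota H (h₃⁻¹ * h₁ * h₃), chiPsi H (h₃⁻¹ * h₂ * h₃)⁆⁻¹) *
      chiIota H t
    = cj ((ii) t) (rr h₁⁻¹ h₂⁻¹ h₃) := by
  have e1 : (ii) (h₃⁻¹ * h₁⁻¹ * h₃) = ((ii) (h₃⁻¹ * h₁ * h₃))⁻¹ := by
    rw [← map_inv]; congr 1; group
  have e2 : (pp) (h₃⁻¹ * h₂⁻¹ * h₃) = ((pp) (h₃⁻¹ * h₂ * h₃))⁻¹ := by
    rw [← map_inv]; congr 1; group
  have e3 : (ii) h₁⁻¹ = ((ii) h₁)⁻¹ := (ii_inv h₁).symm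
  have e4 : (pp) h₂⁻¹ = ((pp) h₂)⁻¹ := (pp_inv h₂).symm
  simp only [rr, dd, e1, e2, e3, e4, bracket_eq_cc, cj, cc]

theorem cj_rr_mem_Sset {T : Set H} {t : H} (ht : t ∈ T) (a b g : H) :
    cj ((ii) t) (rr a b g) ∈ Sset H T := by
  refine ⟨a⁻¹, b⁻¹, g, t, ht, ?_⟩
  rw [stmt_elt, inv_inv, inv_inv]

theorem Sset_cj_i (T : Set H)
    (hT : ∀ h : H, ∃! t : H, t ∈ T ∧ h * t⁻¹ ∈ commutator H) (h : H) :
    ∀ x ∈ Sset H T, cj ((ii) h) x ∈ Sset H T := by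
  rintro x ⟨h₁, h₂, h₃, t, ht, rfl⟩
  rw [stmt_elt, cj_cj, ← map_mul]
  obtain ⟨t', ⟨ht', hc⟩, -⟩ := hT (t * h)
  have hdec : t * h = (t * h * t'⁻¹) * t' := by group
  rw [hdec, map_mul, ← cj_cj,
    cj_eq_self_of_commute (rr_comm_comm h₁⁻¹ h₂⁻¹ h₃ _ hc)]
  exact cj_rr_mem_Sset ht' _ _ _

theorem N_normal (T : Set H)
    (hT : ∀ h : H, ∃! t : H, t ∈ T ∧ h * t⁻¹ ∈ commutator H) : (Nsub T).Normal := by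
  apply normal_of_cj_gen
  · intro h k hk
    exact cj_mem_of_gen _
      (fun x hx => Subgroup.subset_closure (Sset_cj_i T hT h x hx)) k hk
  · intro h k hk
    refine cj_mem_of_gen _ ?_ k hk
    intro x hx
    have hxd : x ∈ Dsub H := by
      obtain ⟨h₁, h₂, h₃, t, ht, rfl⟩ := hx
      rw [stmt_elt]
      exact cj_mem D_normal (rr_mem_D _ _ _) _
    rw [pconj_eq_iconj_onD h hxd]
    exact Subgroup.subset_closure (Sset_cj_i T hT h x hx)

theorem M_eq_N (T : Set H)
    (hT : ∀ h : H, ∃! t : H, t ∈ T ∧ h * t⁻¹ ∈ commutator H) : Msub H = Nsub T := by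
  apply le_antisymm
  · rw [Msub, Subgroup.closure_le]
    rintro x ⟨a, b, g, rfl⟩
    obtain ⟨t, ⟨ht, -⟩, -⟩ := hT 1
    have h1 : cj ((ii) t) (rr a b g) ∈ Nsub T :=
      Subgroup.subset_closure (cj_rr_mem_Sset ht a b g)
    have h2 := cj_mem (N_normal T hT) h1 ((ii) t)⁻¹
    rwa [cj_cancel] at h2
  · rw [Nsub, Subgroup.closure_le]
    rintro x ⟨h₁, h₂, h₃, t, ht, rfl⟩
    rw [stmt_elt]
    exact SetLike.mem_coe.mpr (cj_mem M_normal (rr_mem_M _ _ _) _)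

end ChiAux

namespace ChiAux
variable {H : Type*} [Group H]
local notation "ii" => chiIota H
local notation "pp" => chiPsi H

instance Msub_normal (H : Type*) [Group H] : (Msub H).Normal := M_normal

noncomputable def piM (H : Type*) [Group H] : chi H →* (chi H ⧸ Msub H) :=
  QuotientGroup.mk' (Msub H)

local notation "πm" => piM H

theorem map_cc {G G' : Type*} [Group G] [Group G'] (f : G →* G') (x y : G) :
    f (cc x y) = cc (f x) (f y) := by simp [cc, map_mul, map_inv]

theorem map_cj {G G' : Type*} [Group G] [Group G'] (f : G →* G') (g x : G) :
    f (cj g x) = cj (f g) (f x) := by simp [cj, map_mul, map_inv]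

theorem piM_rr (a b g : H) : πm (rr a b g) = 1 := by
  rw [show (πm (rr a b g)) = ((rr a b g : chi H) : chi H ⧸ Msub H) from rfl]
  rw [QuotientGroup.eq_one_iff]
  exact rr_mem_M a b g

theorem rel_dd (a b g : H) :
    πm (cj ((ii) g) (dd a b)) = πm (dd (g⁻¹ * a * g) (g⁻¹ * b * g)) := by
  have h := piM_rr a b g
  rw [rr, map_mul, map_inv] at h
  exact mul_inv_eq_one.mp h

/-- the swap endomorphism of χ -/
noncomputable def sig (H : Type*) [Group H] : chi H →* chi H :=
  QuotientGroup.lift (Subgroup.normalClosure (chiRel H))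
    ((QuotientGroup.mk' (Subgroup.normalClosure (chiRel H))).comp
      (Monoid.Coprod.swap H H))
    (by
      intro x hx
      have hle : Subgroup.normalClosure (chiRel H) ≤
          ((QuotientGroup.mk' (Subgroup.normalClosure (chiRel H))).comp
            (Monoid.Coprod.swap H H)).ker := by
        apply Subgroup.normalClosure_le_normal
        rintro x ⟨h, rfl⟩
        simp only [SetLike.mem_coe, MonoidHom.mem_ker]
        have e : ((QuotientGroup.mk' (Subgroup.normalClosure (chiRel H))).comp
            (Monoid.Coprod.swap H H))
              ⁅(Monoid.Coprod.inl h : Monoid.Coprod H H), Monoid.Coprod.inr h⁆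
            = ⁅chiPsi H h, chiIota H h⁆ := by
          rw [map_commutatorElement]; rfl
        rw [e]
        exact commutatorElement_eq_one_iff_commute.mpr (comm0 h).symm
      have h2 := hle hx
      rwa [MonoidHom.mem_ker] at h2)

end ChiAux

namespace ChiAux
variable {H : Type*} [Group H]
local notation "ii" => chiIota H
local notation "pp" => chiPsi H
local notation "πm" => piM H

theorem sig_ii (h : H) : sig H ((ii) h) = (pp) h := rfl
theorem sig_pp (h : H) : sig H ((pp) h) = (ii) h := rfl

theorem sig_invol (x : chi H) : sig H (sig H x) = x := by
  have e : (sig H).comp (sig H) = MonoidHom.id (chi H) := by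
    apply QuotientGroup.monoidHom_ext
    apply Monoid.Coprod.hom_ext
    · rfl
    · rfl
  calc sig H (sig H x) = ((sig H).comp (sig H)) x := rfl
  _ = x := by rw [e]; rfl

theorem sig_lam (h : H) : sig H (lam h) = (lam h)⁻¹ := by
  have : sig H (lam h) = ((pp) h)⁻¹ * (ii) h := by
    rw [lam, map_mul, map_inv, sig_ii, sig_pp]
  rw [this, lam]
  group

theorem sig_lam_mem {y : chi H} (hy : y ∈ Lsub H) : sig H y ∈ Lsub H := by
  induction hy using Subgroup.closure_induction with
  | mem x hx =>
    obtain ⟨h, rfl⟩ := hx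
    rw [show ((ii) h)⁻¹ * (pp) h = lam h from rfl, sig_lam]
    exact inv_mem (lam_mem h)
  | one => rw [map_one]; exact one_mem _
  | mul x y hx hy ihx ihy => rw [map_mul]; exact mul_mem ihx ihy
  | inv x hx ihx => rw [map_inv]; exact inv_mem ihx

theorem sig_dd (a b : H) : sig H (dd a b) = dd a b := by
  rw [dd, map_cc, sig_ii, sig_pp, swapD]

theorem sig_rr (a b g : H) : sig H (rr a b g) = rr a b g := by
  rw [rr, map_mul, map_inv, map_cj, sig_ii, sig_dd, sig_dd,
    pconj_eq_iconj_onD g (dd_mem_D a b)]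

theorem sig_M {x : chi H} (hx : x ∈ Msub H) : sig H x ∈ Msub H := by
  induction hx using Subgroup.closure_induction with
  | mem x hx => obtain ⟨a, b, g, rfl⟩ := hx; rw [sig_rr]; exact rr_mem_M a b g
  | one => rw [map_one]; exact one_mem _
  | mul x y hx hy ihx ihy => rw [map_mul]; exact mul_mem ihx ihy
  | inv x hx ihx => rw [map_inv]; exact inv_mem ihx

noncomputable def sigQ (H : Type*) [Group H] : (chi H ⧸ Msub H) →* (chi H ⧸ Msub H) :=
  QuotientGroup.map (Msub H) (Msub H) (sig H) (fun x hx => sig_M hx)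

theorem sigQ_pi (x : chi H) : sigQ H (πm x) = πm (sig H x) := rfl

end ChiAux

namespace ChiAux
variable {H : Type*} [Group H]
local notation "ii" => chiIota H
local notation "pp" => chiPsi H
local notation "πm" => piM H
theorem piM_surj : Function.Surjective (piM H) := QuotientGroup.mk'_surjective _

noncomputable def LQs (H : Type*) [Group H] : Subgroup (chi H ⧸ Msub H) := (Lsub H).map (piM H)
noncomputable def DQs (H : Type*) [Group H] : Subgroup (chi H ⧸ Msub H) := (Dsub H).map (piM H)

local notation "LQ" => LQs H
local notation "DQ" => DQs H

theorem LQ_normal : (LQs H).Normal := Subgroup.Normal.map L_normal _ piM_surj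
theorem DQ_normal : (DQs H).Normal := Subgroup.Normal.map D_normal _ piM_surj

theorem F2Q : ∀ d ∈ DQ, ∀ y ∈ LQ, Commute d y := by
  rintro d hd y hy
  rw [DQs] at hd
  rw [LQs] at hy
  obtain ⟨d₀, hd₀, rfl⟩ := Subgroup.mem_map.mp hd
  obtain ⟨y₀, hy₀, rfl⟩ := Subgroup.mem_map.mp hy
  exact (D_comm_L d₀ hd₀ y₀ hy₀).map (piM H)

theorem cj_eq_one_iff {G : Type*} [Group G] {g x : G} : cj g x = 1 ↔ x = 1 := by
  constructor
  · intro h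
    have := congrArg (cj g⁻¹) h
    rwa [cj_cancel, cj_one_arg] at this
  · rintro rfl; exact cj_one_arg g

/-- identity in χ : cc pb ((lam g⁻¹)⁻¹) = cj (ii g)⁻¹ (cc pb (lam g)) -/
theorem q1c (b g : H) :
    cc ((pp) b) ((lam g⁻¹)⁻¹) = cj ((ii) g)⁻¹ (cc ((pp) b) (lam g)) := by
  rw [← cjlam_inv g, cc_cj_right, inv_inv, cc_p_lam_stable]

theorem baseQ0 (a b g : H) : πm (cc ((ii) a) (cc ((pp) b) (lam g))) = 1 := by
  have h1 := piM_rr (g * a * g⁻¹) b g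
  rw [rr_eq, map_cj, cj_eq_one_iff, map_inv, inv_eq_one] at h1
  rw [q1c, cc_cj_right, inv_inv, cj_ii] at h1
  rw [map_cj, cj_eq_one_iff] at h1
  have e : g⁻¹ * (g * a * g⁻¹) * g = a := by group
  rwa [e] at h1

theorem baseQ (a b g : H) :
    Commute (πm ((ii) a)) (cc (πm ((pp) b)) (πm (lam g))) := by
  have h := baseQ0 a b g
  rw [map_cc, map_cc] at h
  exact commute_of_cc_eq_one h

theorem lam_inv (h : H) : (lam h)⁻¹ = cj ((ii) h) (lam h⁻¹) := by
  have e := cjlam_inv (H := H) h⁻¹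
  rw [inv_inv] at e
  rw [← e, ii_inv, inv_inv]

theorem baseKmain (a h : H) :
    ∃ c : H, ∃ d ∈ DQ, cc (πm ((ii) a)) (πm (lam h)) = πm ((ii) c) * d := by
  refine ⟨cc a h⁻¹, πm (dd (h * a * h⁻¹) h), Subgroup.mem_map.mpr ⟨_, dd_mem_D _ _, rfl⟩, ?_⟩
  have hl : lam h = (pp) h * ((ii) h)⁻¹ := (comm0 h).inv_left.eq
  have e : cc ((ii) a) (lam h)
      = cc ((ii) a) ((ii) h)⁻¹ * cj ((ii) h)⁻¹ (cc ((ii) a) ((pp) h)) := by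
    rw [hl, cc_mul_right]
  have e2 : cc ((ii) a) ((ii) h)⁻¹ = (ii) (cc a h⁻¹) := by
    rw [ii_inv, map_cc]
  have e3 : πm (cj ((ii) h)⁻¹ (cc ((ii) a) ((pp) h))) = πm (dd (h * a * h⁻¹) h) := by
    rw [ii_inv]
    have := rel_dd a h h⁻¹
    rw [show h⁻¹⁻¹ * a * h⁻¹ = h * a * h⁻¹ by group,
      show h⁻¹⁻¹ * h * h⁻¹ = h by group] at this
    exact this
  rw [← map_cc, e, map_mul, e2, e3]

theorem baseKinv (a h : H) :
    ∃ c : H, ∃ d ∈ DQ, cc (πm ((ii) a)) (πm (lam h))⁻¹ = πm ((ii) c) * d := by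
  obtain ⟨c₀, d₀, hd₀, e₀⟩ := baseKmain (h * a * h⁻¹) h⁻¹
  refine ⟨h⁻¹ * c₀ * h, cj (πm ((ii) h)) d₀, cj_mem DQ_normal hd₀ _, ?_⟩
  rw [← map_inv, lam_inv]
  have e1 : cc ((ii) a) (cj ((ii) h) (lam h⁻¹))
      = cj ((ii) h) (cc ((ii) (h * a * h⁻¹)) (lam h⁻¹)) := by
    rw [cc_cj_right, ii_inv, cj_ii, show h⁻¹⁻¹ * a * h⁻¹ = h * a * h⁻¹ by group]
  rw [← map_cc, e1, map_cj, map_cc, e₀, cj_mul, ← map_cj, cj_ii]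

theorem stepK (y₁ y₂ : chi H ⧸ Msub H) (hy₂ : y₂ ∈ LQ)
    (H1 : ∀ a : H, ∃ c : H, ∃ d ∈ DQ, cc (πm ((ii) a)) y₁ = πm ((ii) c) * d)
    (H2 : ∀ a : H, ∃ c : H, ∃ d ∈ DQ, cc (πm ((ii) a)) y₂ = πm ((ii) c) * d) :
    ∀ a : H, ∃ c : H, ∃ d ∈ DQ, cc (πm ((ii) a)) (y₁ * y₂) = πm ((ii) c) * d := by
  intro a
  obtain ⟨c₁, d₁, hd₁, e₁⟩ := H1 a
  obtain ⟨c₂, d₂, hd₂, e₂⟩ := H2 a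
  obtain ⟨c₃, d₃, hd₃, e₃⟩ := H2 c₁
  refine ⟨c₂ * (c₁ * c₃), cj (πm ((ii) (c₁ * c₃))) d₂ * (d₃ * d₁),
    mul_mem (cj_mem DQ_normal hd₂ _) (mul_mem hd₃ hd₁), ?_⟩
  have k1 : cj y₂ d₁ = d₁ := cj_eq_self_of_commute (F2Q _ hd₁ _ hy₂)
  have k2 : cj y₂ (πm ((ii) c₁)) = πm ((ii) c₁) * (πm ((ii) c₃) * d₃) := by
    rw [cj_eq_mul_cc, e₃]
  rw [cc_mul_right, e₂, e₁, cj_mul, k2, k1]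
  simp only [map_mul, cj]
  group

theorem claimK : ∀ y ∈ LQ, ∀ a : H,
    (∃ c : H, ∃ d ∈ DQ, cc (πm ((ii) a)) y = πm ((ii) c) * d) ∧
    (∃ c : H, ∃ d ∈ DQ, cc (πm ((ii) a)) y⁻¹ = πm ((ii) c) * d) := by
  have hLQ : LQs H
      = Subgroup.closure ((piM H) '' {x : chi H | ∃ h : H, x = (chiIota H h)⁻¹ * chiPsi H h}) := by
    rw [LQs, Lsub, MonoidHom.map_closure]
  intro y hy
  rw [hLQ] at hy
  induction hy using Subgroup.closure_induction with
  | mem x hx =>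
    intro a
    obtain ⟨x₀, ⟨h, rfl⟩, rfl⟩ := hx
    exact ⟨baseKmain a h, baseKinv a h⟩
  | one =>
    intro a
    constructor <;>
      exact ⟨1, 1, one_mem _, by
        simp only [inv_one, map_one, mul_one]
        exact commute_cc_eq_one (Commute.one_right _)⟩
  | mul x y hx hy ihx ihy =>
    intro a
    have hxm : x ∈ LQ := by rw [hLQ]; exact hx
    have hym : y ∈ LQ := by rw [hLQ]; exact hy
    constructor
    · exact stepK x y hym (fun a' => (ihx a').1) (fun a' => (ihy a').1) a
    · rw [mul_inv_rev]
      exact stepK y⁻¹ x⁻¹ (inv_mem hxm)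
        (fun a' => (ihy a').2) (fun a' => (ihx a').2) a
  | inv x hx ihx =>
    intro a
    refine ⟨(ihx a).2, ?_⟩
    rw [inv_inv]
    exact (ihx a).1

end ChiAux

namespace ChiAux
variable {H : Type*} [Group H]
local notation "ii" => chiIota H
local notation "pp" => chiPsi H
local notation "πm" => piM H
local notation "LQ" => LQs H
local notation "DQ" => DQs H

theorem commute_cj_right {G : Type*} [Group G] {g x y : G}
    (hc : Commute (cj g⁻¹ x) y) : Commute x (cj g y) := by
  have h1 := congrArg (cj g) (commute_cc_eq_one hc)
  rw [cj_cc, cj_cancel', cj_one_arg] at h1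
  exact commute_of_cc_eq_one h1

theorem baseAmain (a b h : H) :
    Commute (πm ((ii) a)) (cc (πm ((pp) b)) (πm (lam h))) := by
  have := baseQ a b h
  rwa [← map_cc] at this

theorem baseAinv (a b h : H) :
    Commute (πm ((ii) a)) (cc (πm ((pp) b)) (πm (lam h))⁻¹) := by
  rw [← map_inv, lam_inv, ← map_cc]
  have e1 : cc ((pp) b) (cj ((ii) h) (lam h⁻¹))
      = cj ((ii) h) (cc (cj ((ii) h)⁻¹ ((pp) b)) (lam h⁻¹)) := by
    rw [cc_cj_right]
  have e2 : cc (cj ((ii) h)⁻¹ ((pp) b)) (lam h⁻¹) = cc ((pp) b) (lam h⁻¹) := by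
    rw [ii_inv, cc_p_lam_stable]
  rw [e1, e2, map_cj]
  apply commute_cj_right
  have e3 : cj (πm ((ii) h))⁻¹ (πm ((ii) a)) = πm ((ii) (h * a * h⁻¹)) := by
    rw [← map_inv, ← map_cj, ii_inv, cj_ii,
      show h⁻¹⁻¹ * a * h⁻¹ = h * a * h⁻¹ by group]
  rw [e3, map_cc]
  exact baseQ (h * a * h⁻¹) b h⁻¹

theorem claimA : ∀ y ∈ LQ, ∀ a b : H,
    Commute (πm ((ii) a)) (cc (πm ((pp) b)) y) ∧
    Commute (πm ((ii) a)) (cc (πm ((pp) b)) y⁻¹) := by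
  have hLQ : LQs H
      = Subgroup.closure ((piM H) '' {x : chi H | ∃ h : H, x = (chiIota H h)⁻¹ * chiPsi H h}) := by
    rw [LQs, Lsub, MonoidHom.map_closure]
  have helper : ∀ y₁ y₂ : chi H ⧸ Msub H, y₁ ∈ LQ → y₂ ∈ LQ →
      (∀ a b : H, Commute (πm ((ii) a)) (cc (πm ((pp) b)) y₁)) →
      (∀ a b : H, Commute (πm ((ii) a)) (cc (πm ((pp) b)) y₂)) →
      ∀ a b : H, Commute (πm ((ii) a)) (cc (πm ((pp) b)) (y₁ * y₂)) := by
    intro y₁ y₂ hy₁ hy₂ H1 H2 a b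
    rw [cc_mul_right]
    refine (H2 a b).mul_right ?_
    apply commute_cj_right
    obtain ⟨c, d, hd, ec⟩ := (claimK y₂ hy₂ a).2
    have e : cj y₂⁻¹ (πm ((ii) a)) = πm ((ii) a) * (πm ((ii) c) * d) := by
      rw [cj_eq_mul_cc, ec]
    rw [e]
    have hXL : cc (πm ((pp) b)) y₁ ∈ LQ :=
      cc_mem_right_of_normal LQ_normal _ hy₁
    exact (H1 a b).mul_left ((H1 c b).mul_left (F2Q d hd _ hXL))
  intro y hy
  rw [hLQ] at hy
  induction hy using Subgroup.closure_induction with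
  | mem x hx =>
    intro a b
    obtain ⟨x₀, ⟨h, rfl⟩, rfl⟩ := hx
    exact ⟨baseAmain a b h, baseAinv a b h⟩
  | one =>
    intro a b
    have e : cc (πm ((pp) b)) (1 : chi H ⧸ Msub H) = 1 :=
      commute_cc_eq_one (Commute.one_right _)
    refine ⟨by rw [e]; exact Commute.one_right _, ?_⟩
    rw [inv_one, e]
    exact Commute.one_right _
  | mul x y hx hy ihx ihy =>
    intro a b
    have hxm : x ∈ LQ := by rw [hLQ]; exact hx
    have hym : y ∈ LQ := by rw [hLQ]; exact hy
    constructor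
    · exact helper x y hxm hym (fun a' b' => (ihx a' b').1) (fun a' b' => (ihy a' b').1) a b
    · rw [mul_inv_rev]
      exact helper y⁻¹ x⁻¹ (inv_mem hym) (inv_mem hxm)
        (fun a' b' => (ihy a' b').2) (fun a' b' => (ihx a' b').2) a b
  | inv x hx ihx =>
    intro a b
    exact ⟨(ihx a b).2, by rw [inv_inv]; exact (ihx a b).1⟩

theorem claimAsig : ∀ y ∈ LQ, ∀ a b : H,
    Commute (πm ((pp) a)) (cc (πm ((ii) b)) y) := by
  intro y hy a b
  obtain ⟨y₀, hy₀, rfl⟩ :=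
    Subgroup.mem_map.mp (show y ∈ (Lsub H).map (piM H) from hy)
  have hy₁ : πm (sig H y₀) ∈ LQ :=
    Subgroup.mem_map.mpr ⟨sig H y₀, sig_lam_mem hy₀, rfl⟩
  have h := (claimA _ hy₁ a b).1
  have h2 := h.map (sigQ H)
  have e1 : sigQ H (πm ((ii) a)) = πm ((pp) a) := by rw [sigQ_pi, sig_ii]
  have e2 : sigQ H (cc (πm ((pp) b)) (πm (sig H y₀))) = cc (πm ((ii) b)) (πm y₀) := by
    rw [map_cc, sigQ_pi, sigQ_pi, sig_pp, sig_invol]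
  rwa [e1, e2] at h2

theorem R_le_M : Rsub H ≤ Msub H := by
  have hmap : (Rsub H).map (piM H) ≤ ⊥ := by
    rw [Rsub, Subgroup.map_commutator, Subgroup.map_commutator]
    rw [Subgroup.commutator_le]
    intro u hu v hv
    rw [Subgroup.mem_bot, commutatorElement_eq_one_iff_commute]
    have hle : (⁅(chiH H).map (piM H), (Lsub H).map (piM H)⁆ : Subgroup _)
        ≤ Subgroup.centralizer ((chiHpsi H).map (piM H) : Set _) := by
      rw [Subgroup.commutator_le]
      intro x hx y hy
      rw [Subgroup.mem_centralizer_iff]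
      intro z hz
      obtain ⟨x₀, ⟨b, rfl⟩, rfl⟩ := Subgroup.mem_map.mp hx
      obtain ⟨z₀, ⟨a, rfl⟩, rfl⟩ := Subgroup.mem_map.mp hz
      have hyL : y⁻¹ ∈ LQs H := inv_mem (show y ∈ LQs H from hy)
      have hcm : Commute (πm ((pp) a)) (cc (πm ((ii) b))⁻¹ y⁻¹) := by
        rw [← map_inv, ii_inv]
        exact claimAsig _ hyL a b⁻¹
      rw [bracket_eq_cc]
      exact hcm.eq
    exact (Subgroup.mem_centralizer_iff.mp (hle hu) v hv).symm
  intro x hx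
  have h1 : piM H x = 1 := by
    have := hmap (Subgroup.mem_map.mpr ⟨x, hx, rfl⟩)
    rwa [Subgroup.mem_bot] at this
  have h2 : x ∈ (piM H).ker := by rwa [MonoidHom.mem_ker]
  rwa [piM, QuotientGroup.ker_mk'] at h2

end ChiAux


open ChiAux in
/-- If T is a transversal for H′ in H, then R(H) is generated by the
conjugates, by elements of T, of the elements
[h₁, h₂^ψ]^{h₃} · [h₁^{h₃}, (h₂^{h₃})^ψ]⁻¹. -/
theorem stmt_11 (H : Type*) [Group H] (T : Set H)
    (hT : ∀ h : H, ∃! t : H, t ∈ T ∧ h * t⁻¹ ∈ commutator H) :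
    Rsub H =
      Subgroup.closure
        {x : chi H | ∃ h₁ h₂ h₃ : H, ∃ t ∈ T,
          x = (chiIota H t)⁻¹ *
                (((chiIota H h₃)⁻¹ * ⁅chiIota H h₁, chiPsi H h₂⁆ * chiIota H h₃) *
                  ⁅chiIota H (h₃⁻¹ * h₁ * h₃), chiPsi H (h₃⁻¹ * h₂ * h₃)⁆⁻¹) *
                chiIota H t} := by
  have h1 : Rsub H = Msub H := le_antisymm R_le_M M_le_R
  have h2 := M_eq_N T hT
  rw [h1, h2]
  rfl
end
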